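/- arXiv:2411.13062 — 6 statements merged into one kernel-verified Lean document; each statement's English description precedes it below -/
import Mathlib

section
/- Let f be a finite simple graph with k = |V(f)| vertices, g a finite simple graph with |V(g)| ≥ k vertices, and α : V(g) → [0, ∞) a node-weight with |α| := Σ_{v ∈ V(g)} α(v) > 0. Then |ρ(f,(g,α)) − ρ_inj(f,(g,α))| ≤ binom(k,2) · α_max / |α|, where α_max = max_{v ∈ V(g)} α(v). -/
open MeasureTheory Filter Topology
open scoped Classical

namespace EpsCLT

/-- Two subsets of `Fin p` (typically blocks of a partition) *cross* if there exist
`i < k < j < l` with `i, j` in one of them and `k, l` in the other. -/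
def Crosses {p : ℕ} (B₁ B₂ : Finset (Fin p)) : Prop :=
  ∃ i k j l : Fin p, i < k ∧ k < j ∧ j < l ∧
    ((i ∈ B₁ ∧ j ∈ B₁ ∧ k ∈ B₂ ∧ l ∈ B₂) ∨ (i ∈ B₂ ∧ j ∈ B₂ ∧ k ∈ B₁ ∧ l ∈ B₁))

theorem Crosses.symm {p : ℕ} {B₁ B₂ : Finset (Fin p)} (h : Crosses B₁ B₂) : Crosses B₂ B₁ := by
  obtain ⟨i, k, j, l, h1, h2, h3, h4⟩ := h
  exact ⟨i, k, j, l, h1, h2, h3, h4.symm⟩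

/-- `P` is a pair partition of `Fin p`: every block has two elements and every point lies in
exactly one block. -/
def IsPairPartition {p : ℕ} (P : Finset (Finset (Fin p))) : Prop :=
  (∀ B ∈ P, B.card = 2) ∧ ∀ i : Fin p, ∃! B, B ∈ P ∧ i ∈ B

/-- `P` is a partition of `Fin p`: blocks are nonempty and every point lies in exactly one. -/
def IsPartition {p : ℕ} (P : Finset (Finset (Fin p))) : Prop :=
  (∀ B ∈ P, B.Nonempty) ∧ ∀ i : Fin p, ∃! B, B ∈ P ∧ i ∈ B

/-- A partition is noncrossing if no two (distinct) blocks cross. -/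
def IsNoncrossing {p : ℕ} (P : Finset (Finset (Fin p))) : Prop :=
  ∀ B₁ ∈ P, ∀ B₂ ∈ P, B₁ ≠ B₂ → ¬ Crosses B₁ B₂

/-- The intersection graph `f_π` of a partition: vertices are the blocks, with an edge between
two blocks iff they cross. -/
def interGraph {p : ℕ} (P : Finset (Finset (Fin p))) : SimpleGraph {B // B ∈ P} where
  Adj B₁ B₂ := B₁ ≠ B₂ ∧ Crosses B₁.1 B₂.1
  symm := ⟨fun _ _ h => ⟨Ne.symm h.1, h.2.symm⟩⟩
  loopless := ⟨fun _ h => h.1 rfl⟩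

/-- Product over the edges of a graph (each edge counted once) of a symmetric function of the
endpoints.  The function is symmetrized, so for symmetric `F` each factor is `F u v`. -/
noncomputable def edgeProd {V : Type*} [Fintype V] (f : SimpleGraph V) (F : V → V → ℝ) : ℝ :=
  ∏ e ∈ f.edgeFinset, Sym2.lift ⟨fun u v => (F u v + F v u) / 2, fun u v => by ring⟩ e

/-- Homomorphism density `ρ(f, w)` of a finite simple graph in a graphon `w`. -/
noncomputable def density {V : Type*} [Fintype V] (f : SimpleGraph V) (w : ℝ → ℝ → ℝ) : ℝ :=
  ∫ x in Set.univ.pi (fun _ : V => Set.Icc (0:ℝ) 1), edgeProd f (fun u v => w (x u) (x v))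

/-- The step function of an `n × n` matrix: on the box `[(i-1)/n, i/n) × [(j-1)/n, j/n)`
(0-indexed: `[i/n, (i+1)/n) × [j/n, (j+1)/n)`) it takes the value `Q i j`. -/
noncomputable def stepFn {n : ℕ} (Q : Fin n → Fin n → ℝ) (x y : ℝ) : ℝ :=
  if hx : (⌊x * n⌋).toNat < n ∧ (⌊y * n⌋).toNat < n ∧ 0 ≤ x ∧ 0 ≤ y then
    Q ⟨(⌊x * n⌋).toNat, hx.1⟩ ⟨(⌊y * n⌋).toNat, hx.2.1⟩
  else 0

/-- The step graphon `w_g` of a finite simple graph on `[n]`. -/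
noncomputable def stepGraphon {n : ℕ} (g : SimpleGraph (Fin n)) : ℝ → ℝ → ℝ :=
  stepFn (fun i j => if g.Adj i j then 1 else 0)

/-- The finset of all pair partitions of `Fin p`. -/
noncomputable def pairPartitions (p : ℕ) : Finset (Finset (Finset (Fin p))) :=
  Finset.univ.filter IsPairPartition

/-- `Σ_{π ∈ P₂(p)} ρ(f_π, w)`, the `p`-th moment of the limit law `μ_w`. -/
noncomputable def momentFormula (p : ℕ) (w : ℝ → ℝ → ℝ) : ℝ :=
  ∑ P ∈ pairPartitions p, density (interGraph P) w

/-- `g`-independence (ε-independence) of a family of unital subalgebras with respect to a state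
`τ`, following Młotkowski and Speicher–Wysoczański. -/
def GIndep {A : Type*} [Ring A] [Algebra ℂ A] (τ : A →ₗ[ℂ] ℂ) {ι : Type*}
    (g : SimpleGraph ι) (B : ι → Subalgebra ℂ A) : Prop :=
  (∀ i j : ι, g.Adj i j →
      ∀ a ∈ B i, ∀ b ∈ B j, a * b = b * a ∧ τ (a * b) = τ a * τ b) ∧
  (∀ (k : ℕ) (idx : Fin k → ι),
      (∀ j₁ j₂ : Fin k, j₁ < j₂ → idx j₁ = idx j₂ →
        ∃ j₃, j₁ < j₃ ∧ j₃ < j₂ ∧ ¬ g.Adj (idx j₁) (idx j₃)) →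
      ∀ a : Fin k → A, (∀ j, a j ∈ B (idx j)) → (∀ j, τ (a j) = 0) →
        τ (List.ofFn a).prod = 0)

/-- The finset of graph homomorphisms from `f` to `g`. -/
noncomputable def homFinset {V W : Type*} [Fintype V] [Fintype W] (f : SimpleGraph V)
    (g : SimpleGraph W) : Finset (V → W) :=
  Finset.univ.filter fun φ => ∀ u v, f.Adj u v → g.Adj (φ u) (φ v)

/-- The finset of injective graph homomorphisms from `f` to `g`. -/
noncomputable def injHomFinset {V W : Type*} [Fintype V] [Fintype W] (f : SimpleGraph V)
    (g : SimpleGraph W) : Finset (V → W) :=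
  Finset.univ.filter fun φ => Function.Injective φ ∧ ∀ u v, f.Adj u v → g.Adj (φ u) (φ v)

/-- The number of graph homomorphisms `hom(f, g)`. -/
noncomputable def homCount {V W : Type*} [Fintype V] [Fintype W] (f : SimpleGraph V)
    (g : SimpleGraph W) : ℕ := (homFinset f g).card

/-- Weighted homomorphism density `ρ(f, (g, α))` of `f` in a node-weighted graph `(g, α)`. -/
noncomputable def wHomDensity {V W : Type*} [Fintype V] [Fintype W] (f : SimpleGraph V)
    (g : SimpleGraph W) (α : W → ℝ) : ℝ :=
  (∑ φ ∈ homFinset f g, ∏ v : V, α (φ v)) / (∑ v : W, α v) ^ (Fintype.card V)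

/-- Weighted injective homomorphism density `ρ_inj(f, (g, α))`. -/
noncomputable def wInjHomDensity {V W : Type*} [Fintype V] [Fintype W] (f : SimpleGraph V)
    (g : SimpleGraph W) (α : W → ℝ) : ℝ :=
  (∑ φ ∈ injHomFinset f g, ∏ v : V, α (φ v)) / (∑ v : W, α v) ^ (Fintype.card V)


private lemma EpsCLT.sum_biUnion_le' {ι α : Type*} [DecidableEq α] (s : Finset ι)
    (t : ι → Finset α) (f : α → ℝ) (hf : ∀ a, 0 ≤ f a) :
    ∑ a ∈ s.biUnion t, f a ≤ ∑ i ∈ s, ∑ a ∈ t i, f a := by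
  induction s using Finset.cons_induction with
  | empty => simp
  | cons i s hi ih =>
    rw [Finset.cons_eq_insert, Finset.biUnion_insert, Finset.sum_insert hi]
    have h1 := Finset.sum_union_inter (s₁ := t i) (s₂ := s.biUnion t) (f := f)
    have h0 : 0 ≤ ∑ a ∈ t i ∩ s.biUnion t, f a := Finset.sum_nonneg fun a _ => hf a
    linarith

private lemma EpsCLT.pair_sum_le {V W : Type*} [Fintype V] [Fintype W]
    (α : W → ℝ) (hα : ∀ v, 0 ≤ α v) (M : ℝ) (hM : ∀ v, α v ≤ M) (hM0 : 0 ≤ M)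
    {u v : V} (huv : u ≠ v) :
    ∑ φ ∈ Finset.univ.filter (fun φ : V → W => φ u = φ v), ∏ w : V, α (φ w)
      ≤ M * (∑ w : W, α w) ^ (Fintype.card V - 1) := by
  classical
  set A := (Finset.univ : Finset V).erase u with hA
  have step1 : ∀ φ : V → W, ∏ w : V, α (φ w) ≤ M * ∏ w ∈ A, α (φ w) := by
    intro φ
    rw [← Finset.mul_prod_erase Finset.univ (fun w => α (φ w)) (Finset.mem_univ u)]
    exact mul_le_mul_of_nonneg_right (hM _) (Finset.prod_nonneg fun w _ => hα _)
  have hkey : ∑ φ ∈ Finset.univ.filter (fun φ : V → W => φ u = φ v), ∏ w ∈ A, α (φ w)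
      ≤ (∑ w : W, α w) ^ (Fintype.card V - 1) := by
    have hcard : Fintype.card {w // w ∈ A} = Fintype.card V - 1 := by
      rw [Fintype.card_coe, hA, Finset.card_erase_of_mem (Finset.mem_univ u),
        Finset.card_univ]
    have hsum : (∑ w : W, α w) ^ (Fintype.card V - 1)
        = ∑ ψ : {w // w ∈ A} → W, ∏ w : {w // w ∈ A}, α (ψ w) := by
      rw [← hcard, ← Finset.card_univ, ← Finset.prod_const, Finset.prod_univ_sum]
      simp
    set r : (V → W) → ({w // w ∈ A} → W) := fun φ w => φ w.1 with hr
    have hinj : ∀ φ₁ ∈ Finset.univ.filter (fun φ : V → W => φ u = φ v),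
        ∀ φ₂ ∈ Finset.univ.filter (fun φ : V → W => φ u = φ v), r φ₁ = r φ₂ → φ₁ = φ₂ := by
      intro φ₁ h1 φ₂ h2 hre
      funext x
      by_cases hx : x = u
      · subst hx
        have hvA : v ∈ A := Finset.mem_erase.mpr ⟨Ne.symm huv, Finset.mem_univ v⟩
        rw [(Finset.mem_filter.mp h1).2, (Finset.mem_filter.mp h2).2]
        exact congrFun hre ⟨v, hvA⟩
      · exact congrFun hre ⟨x, Finset.mem_erase.mpr ⟨hx, Finset.mem_univ x⟩⟩
    calc ∑ φ ∈ Finset.univ.filter (fun φ : V → W => φ u = φ v), ∏ w ∈ A, α (φ w)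
        = ∑ φ ∈ Finset.univ.filter (fun φ : V → W => φ u = φ v),
            ∏ w : {w // w ∈ A}, α ((r φ) w) := by
          refine Finset.sum_congr rfl fun φ _ => ?_
          exact (Finset.prod_coe_sort A fun w => α (φ w)).symm
      _ = ∑ ψ ∈ (Finset.univ.filter (fun φ : V → W => φ u = φ v)).image r,
            ∏ w : {w // w ∈ A}, α (ψ w) := (Finset.sum_image (f := fun ψ : {w // w ∈ A} → W => ∏ w : {w // w ∈ A}, α (ψ w)) hinj).symm
      _ ≤ ∑ ψ : {w // w ∈ A} → W, ∏ w : {w // w ∈ A}, α (ψ w) :=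
          Finset.sum_le_sum_of_subset_of_nonneg (Finset.subset_univ _)
            (fun ψ _ _ => Finset.prod_nonneg fun w _ => hα _)
      _ = (∑ w : W, α w) ^ (Fintype.card V - 1) := hsum.symm
  calc ∑ φ ∈ Finset.univ.filter (fun φ : V → W => φ u = φ v), ∏ w : V, α (φ w)
      ≤ ∑ φ ∈ Finset.univ.filter (fun φ : V → W => φ u = φ v), M * ∏ w ∈ A, α (φ w) :=
        Finset.sum_le_sum fun φ _ => step1 φ
    _ = M * ∑ φ ∈ Finset.univ.filter (fun φ : V → W => φ u = φ v), ∏ w ∈ A, α (φ w) :=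
        (Finset.mul_sum _ _ _).symm
    _ ≤ M * (∑ w : W, α w) ^ (Fintype.card V - 1) :=
        mul_le_mul_of_nonneg_left hkey hM0

/-- **Lemma 4.2.**  For a node-weighted graph `(g, α)` with `|V(g)| ≥ |V(f)|`, the weighted
homomorphism density and its injective version differ by at most `C(k,2)·α_max/|α|`. -/
theorem wHomDensity_sub_wInjHomDensity_abs_le
    {V W : Type*} [Fintype V] [Fintype W] [Nonempty W]
    (f : SimpleGraph V) (g : SimpleGraph W)
    (α : W → ℝ) (hα : ∀ v, 0 ≤ α v)
    (hcard : Fintype.card V ≤ Fintype.card W)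
    (hsum : 0 < ∑ v : W, α v) :
    |wHomDensity f g α - wInjHomDensity f g α| ≤
      ((Fintype.card V).choose 2 : ℝ) * (Finset.univ.sup' Finset.univ_nonempty α) /
        (∑ v : W, α v) := by
  classical
  obtain ⟨w₀⟩ := ‹Nonempty W›
  set S := ∑ v : W, α v with hSdef
  set M := Finset.univ.sup' Finset.univ_nonempty α with hMdef
  have hMle : ∀ w : W, α w ≤ M := fun w => Finset.le_sup' α (Finset.mem_univ w)
  have hM0 : 0 ≤ M := (hα w₀).trans (hMle w₀)
  have hsub : injHomFinset f g ⊆ homFinset f g := by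
    intro φ hφ
    simp only [injHomFinset, homFinset, Finset.mem_filter, Finset.mem_univ, true_and] at *
    exact hφ.2
  set k := Fintype.card V with hk
  set N := homFinset f g \ injHomFinset f g with hN
  have hNni : ∀ φ ∈ N, ¬ Function.Injective φ := by
    intro φ hφ hinj
    obtain ⟨h1, h2⟩ := Finset.mem_sdiff.mp hφ
    exact h2 (Finset.mem_filter.mpr ⟨Finset.mem_univ _, hinj, (Finset.mem_filter.mp h1).2⟩)
  have hdiff : wHomDensity f g α - wInjHomDensity f g α
      = (∑ φ ∈ N, ∏ v : V, α (φ v)) / S ^ k := by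
    rw [wHomDensity, wInjHomDensity, div_sub_div_same, ← Finset.sum_sdiff hsub,
      add_sub_cancel_right]
  have hnum_nonneg : 0 ≤ ∑ φ ∈ N, ∏ v : V, α (φ v) :=
    Finset.sum_nonneg fun φ _ => Finset.prod_nonneg fun v _ => hα _
  rcases Nat.eq_zero_or_pos k with hk0 | hkpos
  · have hVempty : IsEmpty V := Fintype.card_eq_zero_iff.mp hk0
    have hNe : N = ∅ := by
      refine Finset.eq_empty_of_forall_notMem fun φ hφ => ?_
      exact hNni φ hφ (fun a b _ => hVempty.elim a)
    rw [hdiff, hNe]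
    simp [hk0]
  · have hnum : ∑ φ ∈ N, ∏ v : V, α (φ v) ≤ (k.choose 2 : ℝ) * (M * S ^ (k - 1)) := by
      set pairs := (Finset.univ : Finset V).powersetCard 2 with hp
      set Afun : Finset V → Finset (V → W) :=
        fun s => Finset.univ.filter (fun φ : V → W => ∃ a ∈ s, ∃ b ∈ s, a ≠ b ∧ φ a = φ b)
        with hAfun
      have hsubN : N ⊆ pairs.biUnion Afun := by
        intro φ hφ
        have hni := hNni φ hφ
        rw [Function.not_injective_iff] at hni
        obtain ⟨a, b, hab, hne⟩ := hni
        refine Finset.mem_biUnion.mpr ⟨{a, b}, ?_, ?_⟩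
        · exact Finset.mem_powersetCard.mpr ⟨Finset.subset_univ _, Finset.card_pair hne⟩
        · exact Finset.mem_filter.mpr ⟨Finset.mem_univ _, a, Finset.mem_insert_self _ _,
            b, Finset.mem_insert_of_mem (Finset.mem_singleton_self _), hne, hab⟩
      calc ∑ φ ∈ N, ∏ v : V, α (φ v)
          ≤ ∑ φ ∈ pairs.biUnion Afun, ∏ v : V, α (φ v) :=
            Finset.sum_le_sum_of_subset_of_nonneg hsubN
              (fun φ _ _ => Finset.prod_nonneg fun v _ => hα _)
        _ ≤ ∑ s ∈ pairs, ∑ φ ∈ Afun s, ∏ v : V, α (φ v) :=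
            EpsCLT.sum_biUnion_le' _ _ _ (fun φ => Finset.prod_nonneg fun v _ => hα _)
        _ ≤ ∑ s ∈ pairs, M * S ^ (k - 1) := by
            refine Finset.sum_le_sum fun s hs => ?_
            obtain ⟨u, v, huv, rfl⟩ := Finset.card_eq_two.mp (Finset.mem_powersetCard.mp hs).2
            have hAs : Afun {u, v} ⊆ Finset.univ.filter (fun φ : V → W => φ u = φ v) := by
              intro φ hφ
              obtain ⟨-, a, ha, b, hb, hab, he⟩ := Finset.mem_filter.mp hφ
              simp only [Finset.mem_insert, Finset.mem_singleton] at ha hb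
              refine Finset.mem_filter.mpr ⟨Finset.mem_univ _, ?_⟩
              rcases ha with rfl | rfl <;> rcases hb with rfl | rfl
              · exact absurd rfl hab
              · exact he
              · exact he.symm
              · exact absurd rfl hab
            refine le_trans (Finset.sum_le_sum_of_subset_of_nonneg hAs
              (fun φ _ _ => Finset.prod_nonneg fun v _ => hα _)) ?_
            exact EpsCLT.pair_sum_le α hα M hMle hM0 huv
        _ = (k.choose 2 : ℝ) * (M * S ^ (k - 1)) := by
            rw [Finset.sum_const, hp, Finset.card_powersetCard, Finset.card_univ, ← hk,
              nsmul_eq_mul]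
    rw [hdiff, abs_of_nonneg (div_nonneg hnum_nonneg (pow_nonneg hsum.le _)),
      div_le_div_iff₀ (pow_pos hsum _) hsum]
    calc (∑ φ ∈ N, ∏ v : V, α (φ v)) * S
        ≤ ((k.choose 2 : ℝ) * (M * S ^ (k - 1))) * S :=
          mul_le_mul_of_nonneg_right hnum hsum.le
      _ = (k.choose 2 : ℝ) * M * S ^ k := by
          rw [mul_assoc, mul_assoc, ← pow_succ, Nat.sub_add_cancel hkpos, ← mul_assoc]


end EpsCLT
end

section
/- Let (Q_n)_{n≥1} be symmetric n×n matrices with entries in [−1,1] and assume the step graphons w_{Q_n} converge to a symmetric measurable w : [0,1]² → [−1,1] (i.e. ρ(f, w_{Q_n}) → ρ(f, w) for every finite simple graph f). For each n, let s_1, …, s_n be a mixed q-Gaussian system with matrix Q_n in a noncommutative probability space (A, τ), and set S_n = n^{−1/2} Σ_{k=1}^n s_k. Then for every p ∈ ℕ, τ(S_n^p) → Σ_{π ∈ P_2(p)} ρ(f_π, w) as n → ∞; in particular the limiting odd moments vanish. -/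
open MeasureTheory Filter Topology
open scoped Classical

namespace EpsCLT

section Aux
open Set

lemma floor_mul_eq {n : ℕ} (k : Fin n) {x : ℝ}
    (hx : x ∈ Set.Ico ((k:ℝ)/n) (((k:ℝ)+1)/n)) : ⌊x * n⌋ = (k : ℤ) := by
  have hn : (0:ℝ) < n := by exact_mod_cast k.pos
  rw [Int.floor_eq_iff]
  constructor
  · push_cast
    calc ((k:ℝ)) = ((k:ℝ)/n) * n := by field_simp
    _ ≤ x * n := by gcongr; exact hx.1
  · push_cast
    calc x * n < (((k:ℝ)+1)/n) * n := by gcongr; exact hx.2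
    _ = (k:ℝ) + 1 := by field_simp

lemma stepFn_on_box {n : ℕ} (Q : Fin n → Fin n → ℝ) (k l : Fin n) {x y : ℝ}
    (hx : x ∈ Set.Ico ((k:ℝ)/n) (((k:ℝ)+1)/n))
    (hy : y ∈ Set.Ico ((l:ℝ)/n) (((l:ℝ)+1)/n)) : stepFn Q x y = Q k l := by
  have hn : (0:ℝ) < n := by exact_mod_cast k.pos
  have h0x : 0 ≤ x := le_trans (by positivity) hx.1
  have h0y : 0 ≤ y := le_trans (by positivity) hy.1
  have hfx : ⌊x * n⌋ = (k : ℤ) := floor_mul_eq k hx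
  have hfy : ⌊y * n⌋ = (l : ℤ) := floor_mul_eq l hy
  have hkx : (⌊x * n⌋).toNat = (k : ℕ) := by rw [hfx]; simp
  have hky : (⌊y * n⌋).toNat = (l : ℕ) := by rw [hfy]; simp
  rw [stepFn, dif_pos]
  · congr 1 <;> apply Fin.ext <;> simp [hkx, hky]
  · exact ⟨by rw [hkx]; exact k.2, by rw [hky]; exact l.2, h0x, h0y⟩

end Aux

section Box
open Set

variable {V : Type*} [Fintype V] {n : ℕ}

/-- The half-open box indexed by `φ`. -/
def box (φ : V → Fin n) : Set (V → ℝ) :=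
  Set.univ.pi fun v => Set.Ico ((φ v : ℝ)/n) (((φ v : ℝ)+1)/n)

lemma measurableSet_box (φ : V → Fin n) : MeasurableSet (box φ) :=
  MeasurableSet.univ_pi fun _ => measurableSet_Ico

lemma volume_box (hn : 0 < n) (φ : V → Fin n) :
    (volume (box φ)).toReal = (1 / (n:ℝ)) ^ Fintype.card V := by
  have hn' : (0:ℝ) < n := by exact_mod_cast hn
  rw [box, volume_pi_pi]
  have : ∀ v : V, volume (Set.Ico ((φ v : ℝ)/n) (((φ v : ℝ)+1)/n))
      = ENNReal.ofReal (1 / (n:ℝ)) := by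
    intro v
    rw [Real.volume_Ico]
    congr 1
    field_simp
    ring
  simp only [this, Finset.prod_const, Finset.card_univ]
  rw [ENNReal.toReal_pow, ENNReal.toReal_ofReal (by positivity)]

lemma pi_Ico_eq_biUnion (hn : 0 < n) :
    Set.univ.pi (fun _ : V => Set.Ico (0:ℝ) 1)
      = ⋃ φ ∈ (Finset.univ : Finset (V → Fin n)), box φ := by
  have hn' : (0:ℝ) < n := by exact_mod_cast hn
  ext x
  simp only [Set.mem_pi, Set.mem_univ, forall_true_left, Set.mem_iUnion, Finset.mem_univ,
    exists_true_left, box, exists_prop, true_and]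
  constructor
  · intro hx
    have hnn : ∀ v, (0:ℤ) ≤ ⌊x v * n⌋ := fun v =>
      Int.floor_nonneg.mpr (by have := (hx v).1; positivity)
    have hlt : ∀ v, ⌊x v * n⌋ < (n:ℤ) := fun v => Int.floor_lt.mpr (by
      calc x v * n < 1 * n := by gcongr; exact (hx v).2
      _ = (n:ℝ) := by ring)
    refine ⟨fun v => ⟨(⌊x v * n⌋).toNat, by have := hnn v; have := hlt v; omega⟩, fun v => ?_⟩
    have hcast : ((((⌊x v * n⌋).toNat : ℕ)) : ℝ) = (⌊x v * n⌋ : ℝ) := by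
      exact_mod_cast Int.toNat_of_nonneg (hnn v)
    constructor
    · rw [div_le_iff₀ hn']
      rw [hcast]
      exact Int.floor_le _
    · rw [lt_div_iff₀ hn']
      rw [hcast]
      exact Int.lt_floor_add_one _
  · rintro ⟨φ, hφ⟩ v
    refine ⟨le_trans (by positivity) (hφ v).1, lt_of_lt_of_le (hφ v).2 ?_⟩
    rw [div_le_one hn']
    have : (φ v : ℕ) + 1 ≤ n := (φ v).2
    exact_mod_cast this

lemma box_disjoint : Set.Pairwise (Set.univ : Set (V → Fin n))
    (Function.onFun Disjoint (box (V := V) (n := n))) := by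
  intro φ _ ψ _ hne
  rw [Function.onFun, Set.disjoint_left]
  intro x hxφ hxψ
  apply hne
  funext v
  have h1 := floor_mul_eq (φ v) (hxφ v (Set.mem_univ v))
  have h2 := floor_mul_eq (ψ v) (hxψ v (Set.mem_univ v))
  have : ((φ v : ℕ) : ℤ) = ((ψ v : ℕ) : ℤ) := by rw [← h1, ← h2]
  exact Fin.ext (by exact_mod_cast this)

end Box

section DensityStep
open Set

variable {V : Type*} [Fintype V] {n : ℕ}

lemma volume_box' (φ : V → Fin n) :
    volume (box φ) = ENNReal.ofReal (1 / (n:ℝ)) ^ Fintype.card V := by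
  rw [box, volume_pi_pi]
  have : ∀ v : V, volume (Set.Ico ((φ v : ℝ)/n) (((φ v : ℝ)+1)/n))
      = ENNReal.ofReal (1 / (n:ℝ)) := by
    intro v
    rw [Real.volume_Ico]
    congr 1
    by_cases hn : (n:ℝ) = 0
    · simp [hn]
    · field_simp
      ring
  simp only [this, Finset.prod_const, Finset.card_univ]

lemma edgeProd_congr (f : SimpleGraph V) {F F' : V → V → ℝ} (h : ∀ u v, F u v = F' u v) :
    edgeProd f F = edgeProd f F' := by
  have : F = F' := by funext u v; exact h u v
  rw [this]

lemma density_stepFn (f : SimpleGraph V) (hn : 0 < n) (Q : Fin n → Fin n → ℝ) :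
    density f (stepFn Q) = (1/(n:ℝ)) ^ Fintype.card V *
      ∑ φ : V → Fin n, edgeProd f (fun u v => Q (φ u) (φ v)) := by
  have hae : (Set.univ.pi fun _ : V => Set.Icc (0:ℝ) 1) =ᵐ[volume]
      (Set.univ.pi fun _ : V => Set.Ico (0:ℝ) 1) := by
    rw [MeasureTheory.ae_eq_set]
    constructor
    · refine measure_mono_null (t := ⋃ v : V, {g : V → ℝ | g v = 1}) ?_ ?_
      · rintro x ⟨hx1, hx2⟩
        simp only [Set.mem_pi, Set.mem_univ, forall_true_left] at hx1 hx2
        push_neg at hx2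
        obtain ⟨v, hv⟩ := hx2
        refine Set.mem_iUnion.mpr ⟨v, ?_⟩
        have h1 := (hx1 v).1
        have h2 := (hx1 v).2
        simp only [Set.mem_Ico, not_and, not_lt] at hv
        have : x v = 1 := le_antisymm h2 (hv h1)
        simpa using this
      · refine measure_iUnion_null fun v => ?_
        rw [volume_pi]
        exact MeasureTheory.Measure.pi_hyperplane _ v 1
    · have : ((Set.univ.pi fun _ : V => Set.Ico (0:ℝ) 1) \
        (Set.univ.pi fun _ : V => Set.Icc (0:ℝ) 1)) = ∅ := by
        rw [Set.diff_eq_empty]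
        exact Set.pi_mono fun v _ => Set.Ico_subset_Icc_self
      rw [this]; simp
  have hbox_const : ∀ φ : V → Fin n, ∀ x ∈ box φ,
      edgeProd f (fun u v => stepFn Q (x u) (x v))
        = edgeProd f (fun u v => Q (φ u) (φ v)) := by
    intro φ x hx
    exact edgeProd_congr f fun u v =>
      stepFn_on_box Q (φ u) (φ v) (hx u (Set.mem_univ u)) (hx v (Set.mem_univ v))
  have hvol_lt : ∀ φ : V → Fin n, volume (box φ) < ⊤ := by
    intro φ
    rw [volume_box']
    exact ENNReal.pow_lt_top ENNReal.ofReal_lt_top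
  rw [density, setIntegral_congr_set hae, pi_Ico_eq_biUnion hn,
    integral_biUnion_finset Finset.univ (fun φ _ => measurableSet_box φ)
      (fun φ _ ψ _ h => box_disjoint (Set.mem_univ φ) (Set.mem_univ ψ) h)
      (fun φ _ => (MeasureTheory.integrableOn_const (hvol_lt φ).ne).congr_fun
        (fun x hx => (hbox_const φ x hx).symm) (measurableSet_box φ))]
  rw [Finset.mul_sum]
  refine Finset.sum_congr rfl fun φ _ => ?_
  rw [setIntegral_congr_fun (measurableSet_box φ) (hbox_const φ),
    setIntegral_const, smul_eq_mul, measureReal_def, volume_box hn, mul_comm]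

end DensityStep

section DensityComap

variable {W V : Type*} [Fintype W] [Fintype V]

lemma edgeProd_comap (e : W ≃ V) (f : SimpleGraph V) (F : W → W → ℝ) :
    edgeProd (SimpleGraph.comap e f) F = edgeProd f (fun u v => F (e.symm u) (e.symm v)) := by
  rw [edgeProd, edgeProd]
  refine Finset.prod_nbij' (Sym2.map e) (Sym2.map e.symm) ?_ ?_ ?_ ?_ ?_
  · intro d hd
    induction d with
    | _ a b =>
      simp only [SimpleGraph.mem_edgeFinset, SimpleGraph.mem_edgeSet, SimpleGraph.comap_adj,
        Sym2.map_pair_eq] at hd ⊢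
      exact hd
  · intro d hd
    induction d with
    | _ a b =>
      simp only [SimpleGraph.mem_edgeFinset, SimpleGraph.mem_edgeSet, SimpleGraph.comap_adj,
        Sym2.map_pair_eq, Equiv.apply_symm_apply] at hd ⊢
      exact hd
  · intro d _
    induction d with
    | _ a b => simp
  · intro d _
    induction d with
    | _ a b => simp
  · intro d _
    induction d with
    | _ a b => simp

lemma density_comap (e : W ≃ V) (f : SimpleGraph V) (w : ℝ → ℝ → ℝ) :
    density (SimpleGraph.comap e f) w = density f w := by
  have hT : MeasurePreserving (MeasurableEquiv.arrowCongr' e (MeasurableEquiv.refl ℝ))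
      (volume : Measure (W → ℝ)) (volume : Measure (V → ℝ)) :=
    MeasureTheory.volume_preserving_arrowCongr' e (MeasurableEquiv.refl ℝ)
      (MeasurePreserving.id _)
  set T := MeasurableEquiv.arrowCongr' e (MeasurableEquiv.refl ℝ) with hTdef
  have hTapp : ∀ (x : W → ℝ) (b : V), T x b = x (e.symm b) := fun x b => rfl
  have key := hT.setIntegral_preimage_emb T.measurableEmbedding
      (fun y => edgeProd f (fun u v => w (y u) (y v)))
      (Set.univ.pi fun _ : V => Set.Icc (0:ℝ) 1)
  rw [density, density, ← key]
  have hset : T ⁻¹' (Set.univ.pi fun _ : V => Set.Icc (0:ℝ) 1)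
      = Set.univ.pi fun _ : W => Set.Icc (0:ℝ) 1 := by
    ext x
    simp only [Set.mem_preimage, Set.mem_pi, Set.mem_univ, forall_true_left, hTapp]
    constructor
    · intro h a
      have := h (e a)
      rwa [Equiv.symm_apply_apply] at this
    · intro h b
      exact h (e.symm b)
  rw [hset]
  refine setIntegral_congr_fun (MeasurableSet.univ_pi fun _ => measurableSet_Icc)
    fun x _ => ?_
  rw [edgeProd_comap]
  exact edgeProd_congr f fun u v => by rw [hTapp, hTapp]

end DensityComap

section Comb

variable {p : ℕ}

lemma block_nonempty {P : Finset (Finset (Fin p))} (hP : IsPairPartition P)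
    {B : Finset (Fin p)} (hB : B ∈ P) : B.Nonempty :=
  Finset.card_pos.mp (by rw [hP.1 B hB]; norm_num)

noncomputable def blockOf {P : Finset (Finset (Fin p))} (hP : IsPairPartition P)
    (j : Fin p) : {B // B ∈ P} :=
  ⟨(hP.2 j).exists.choose, (hP.2 j).exists.choose_spec.1⟩

lemma mem_blockOf {P : Finset (Finset (Fin p))} (hP : IsPairPartition P) (j : Fin p) :
    j ∈ (blockOf hP j).1 :=
  (hP.2 j).exists.choose_spec.2

lemma blockOf_eq {P : Finset (Finset (Fin p))} (hP : IsPairPartition P) {j : Fin p}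
    {B : Finset (Fin p)} (hB : B ∈ P) (hj : j ∈ B) : (blockOf hP j).1 = B := by
  obtain ⟨C, hC, hun⟩ := hP.2 j
  rw [hun _ ⟨(blockOf hP j).2, mem_blockOf hP j⟩, hun _ ⟨hB, hj⟩]

lemma two_mul_card {P : Finset (Finset (Fin p))} (hP : IsPairPartition P) :
    2 * P.card = p := by
  have hdisj : ∀ B₁ ∈ P, ∀ B₂ ∈ P, B₁ ≠ B₂ → Disjoint B₁ B₂ := by
    intro B₁ h₁ B₂ h₂ hne
    rw [Finset.disjoint_left]
    intro j hj₁ hj₂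
    exact hne (((hP.2 j).unique ⟨h₁, hj₁⟩ ⟨h₂, hj₂⟩))
  have hunion : (P.biUnion fun x => x) = Finset.univ := by
    apply Finset.eq_univ_of_forall
    intro j
    simp only [Finset.mem_biUnion]
    exact ⟨(blockOf hP j).1, (blockOf hP j).2, mem_blockOf hP j⟩
  have := Finset.card_biUnion hdisj
  rw [hunion, Finset.card_univ, Fintype.card_fin] at this
  have h2 : ∑ u ∈ P, u.card = 2 * P.card := by
    rw [Finset.sum_congr rfl (fun B hB => hP.1 B hB), Finset.sum_const, smul_eq_mul, mul_comm]
  omega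

lemma pairPartitions_eq_empty (hp : Odd p) : pairPartitions p = ∅ := by
  rw [Finset.eq_empty_iff_forall_notMem]
  intro P hP
  rw [pairPartitions, Finset.mem_filter] at hP
  have := two_mul_card hP.2
  obtain ⟨m, hm⟩ := hp
  omega

lemma momentFormula_odd (hp : Odd p) (w : ℝ → ℝ → ℝ) : momentFormula p w = 0 := by
  rw [momentFormula, pairPartitions_eq_empty hp, Finset.sum_empty]

lemma sum_ker_eq {n : ℕ} {P : Finset (Finset (Fin p))} (hP : IsPairPartition P)
    (Q : Fin n → Fin n → ℝ) :
    ∑ i ∈ Finset.univ.filter (fun i : Fin p → Fin n =>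
        ∀ B ∈ P, ∀ u ∈ B, ∀ v ∈ B, i u = i v),
        edgeProd (interGraph P) (fun U V =>
          if h : U.1.Nonempty ∧ V.1.Nonempty then Q (i (U.1.min' h.1)) (i (V.1.min' h.2)) else 1)
      = ∑ φ : {B // B ∈ P} → Fin n, edgeProd (interGraph P) (fun U V => Q (φ U) (φ V)) := by
  refine Finset.sum_nbij' (fun i U => i (U.1.min' (block_nonempty hP U.2)))
    (fun φ j => φ (blockOf hP j)) (fun i _ => Finset.mem_univ _) ?_ ?_ ?_ ?_
  · intro φ _
    rw [Finset.mem_filter]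
    refine ⟨Finset.mem_univ _, fun B hB u hu v hv => ?_⟩
    have h1 : (blockOf hP u) = ⟨B, hB⟩ := Subtype.ext (blockOf_eq hP hB hu)
    have h2 : (blockOf hP v) = ⟨B, hB⟩ := Subtype.ext (blockOf_eq hP hB hv)
    show φ (blockOf hP u) = φ (blockOf hP v)
    rw [h1, h2]
  · intro i hi
    rw [Finset.mem_filter] at hi
    funext j
    have hj : j ∈ (blockOf hP j).1 := mem_blockOf hP j
    have hm : (blockOf hP j).1.min' (block_nonempty hP (blockOf hP j).2) ∈ (blockOf hP j).1 :=
      Finset.min'_mem _ _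
    exact hi.2 _ (blockOf hP j).2 _ hm _ hj
  · intro φ _
    funext U
    show φ (blockOf hP ((U.1).min' _)) = φ U
    exact congrArg φ (Subtype.ext (blockOf_eq hP U.2 (Finset.min'_mem _ _)))
  · intro i _
    refine edgeProd_congr _ fun U V => ?_
    rw [dif_pos ⟨block_nonempty hP U.2, block_nonempty hP V.2⟩]

end Comb

section PowSum

lemma sum_pow_expand {A : Type*} [Ring A] {ι : Type*} [Fintype ι] (a : ι → A) (p : ℕ) :
    (∑ k, a k) ^ p = ∑ i : Fin p → ι, (List.ofFn fun j => a (i j)).prod := by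
  induction p with
  | zero => simp
  | succ p ih =>
    rw [pow_succ', ih, Finset.mul_sum]
    rw [← (Fin.consEquiv (fun _ : Fin (p+1) => ι)).sum_comp
      (fun i => (List.ofFn fun j => a (i j)).prod)]
    rw [Fintype.sum_prod_type]
    rw [Finset.sum_comm]
    refine Finset.sum_congr rfl fun i _ => ?_
    rw [Finset.sum_mul]
    refine Finset.sum_congr rfl fun k _ => ?_
    rw [List.ofFn_succ, List.prod_cons]
    simp [Fin.consEquiv]

end PowSum

open scoped ComplexOrder in
/-- **Theorem 5.1 (CLT for mixed q-Gaussian systems).**  If the step graphons of the symmetric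
matrices `Q_n` (entries in `[-1,1]`) converge to `w`, and `s_1, …, s_n` is a mixed `q`-Gaussian
system with matrix `Q_n`, then the moments of `S_n = n^{-1/2} Σ_k s_k` converge to
`Σ_{π ∈ P₂(p)} ρ(f_π, w)`; odd limiting moments vanish. -/
theorem clt_for_mixed_qGaussian
    {A : Type*} [CStarAlgebra A]
    (τ : A →ₗ[ℂ] ℂ) (hτ1 : τ 1 = 1)
    (hτpos : ∀ a : A, 0 ≤ τ (star a * a))
    (hτtr : ∀ a b : A, τ (a * b) = τ (b * a))
    (Q : ∀ n : ℕ, Fin n → Fin n → ℝ)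
    (hQsymm : ∀ n i j, Q n i j = Q n j i)
    (hQmem : ∀ n i j, Q n i j ∈ Set.Icc (-1:ℝ) 1)
    (w : ℝ → ℝ → ℝ)
    (hw_meas : Measurable (Function.uncurry w))
    (hw_symm : ∀ x y : ℝ, w x y = w y x)
    (hw_mem : ∀ x y : ℝ, w x y ∈ Set.Icc (-1:ℝ) 1)
    (hconv : ∀ (m : ℕ) (f : SimpleGraph (Fin m)),
      Tendsto (fun n => density f (stepFn (Q n))) atTop (𝓝 (density f w)))
    (s : ∀ n : ℕ, Fin n → A)
    (hsa : ∀ n k, IsSelfAdjoint (s n k))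
    (hmom : ∀ (n : ℕ) (p : ℕ) (i : Fin p → Fin n),
      τ (List.ofFn (fun j => s n (i j))).prod =
        ((∑ P ∈ (pairPartitions p).filter
            (fun P => ∀ B ∈ P, ∀ u ∈ B, ∀ v ∈ B, i u = i v),
          edgeProd (interGraph P) (fun U V =>
            if h : U.1.Nonempty ∧ V.1.Nonempty then
              Q n (i (U.1.min' h.1)) (i (V.1.min' h.2)) else 1) : ℝ) : ℂ))
    (p : ℕ) :
    Tendsto (fun n : ℕ => τ (((Real.sqrt n : ℂ)⁻¹ • ∑ k : Fin n, s n k) ^ p))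
      atTop (𝓝 ((momentFormula p w : ℝ) : ℂ)) ∧
    (Odd p → momentFormula p w = 0) := by
  classical
  -- the real-valued moment sequence
  set R : ℕ → ℝ := fun n => ((Real.sqrt n)⁻¹)^p *
    ∑ i : Fin p → Fin n, ∑ P ∈ (pairPartitions p).filter
        (fun P => ∀ B ∈ P, ∀ u ∈ B, ∀ v ∈ B, i u = i v),
      edgeProd (interGraph P) (fun U V =>
        if h : U.1.Nonempty ∧ V.1.Nonempty then
          Q n (i (U.1.min' h.1)) (i (V.1.min' h.2)) else 1) with hRdef
  have hA : ∀ n : ℕ,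
      τ ((((Real.sqrt n : ℂ))⁻¹ • ∑ k : Fin n, s n k) ^ p) = ((R n : ℝ) : ℂ) := by
    intro n
    rw [smul_pow, LinearMap.map_smul, sum_pow_expand (fun k => s n k) p, map_sum,
      Finset.sum_congr rfl (fun i _ => hmom n p i), ← Complex.ofReal_sum, hRdef]
    push_cast
    rw [smul_eq_mul]
  have hB : ∀ n : ℕ, 0 < n →
      R n = ∑ P ∈ pairPartitions p, density (interGraph P) (stepFn (Q n)) := by
    intro n hn
    have hswap :
        (∑ i : Fin p → Fin n, ∑ P ∈ (pairPartitions p).filter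
            (fun P => ∀ B ∈ P, ∀ u ∈ B, ∀ v ∈ B, i u = i v),
          edgeProd (interGraph P) (fun U V =>
            if h : U.1.Nonempty ∧ V.1.Nonempty then
              Q n (i (U.1.min' h.1)) (i (V.1.min' h.2)) else 1))
        = ∑ P ∈ pairPartitions p, ∑ i ∈ Finset.univ.filter
            (fun i : Fin p → Fin n => ∀ B ∈ P, ∀ u ∈ B, ∀ v ∈ B, i u = i v),
          edgeProd (interGraph P) (fun U V =>
            if h : U.1.Nonempty ∧ V.1.Nonempty then
              Q n (i (U.1.min' h.1)) (i (V.1.min' h.2)) else 1) := by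
      simp only [Finset.sum_filter]
      exact Finset.sum_comm
    rw [hRdef]
    show ((Real.sqrt n)⁻¹)^p * _ = _
    rw [hswap, Finset.mul_sum]
    refine Finset.sum_congr rfl fun P hP => ?_
    have hPP : IsPairPartition P := by
      rw [pairPartitions, Finset.mem_filter] at hP; exact hP.2
    rw [sum_ker_eq hPP (Q n), density_stepFn (interGraph P) hn (Q n), Fintype.card_coe]
    have h2 : 2 * P.card = p := two_mul_card hPP
    have hn' : (0:ℝ) ≤ n := Nat.cast_nonneg n
    have hpow : ((Real.sqrt n)⁻¹)^p = (1/(n:ℝ))^P.card := by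
      calc ((Real.sqrt n)⁻¹)^p = ((Real.sqrt n)⁻¹)^(2*P.card) := by rw [h2]
      _ = (1/(n:ℝ))^P.card := by rw [pow_mul, inv_pow, Real.sq_sqrt hn', one_div]
    rw [hpow]
    congr!
  have hC : Tendsto R atTop (𝓝 (momentFormula p w)) := by
    have hlim : Tendsto (fun n => ∑ P ∈ pairPartitions p, density (interGraph P) (stepFn (Q n)))
        atTop (𝓝 (momentFormula p w)) := by
      rw [momentFormula]
      refine tendsto_finset_sum _ fun P hP => ?_
      have h1 : ∀ w' : ℝ → ℝ → ℝ,
          density (SimpleGraph.comap (⇑P.equivFin.symm) (interGraph P)) w'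
            = density (interGraph P) w' :=
        fun w' => density_comap P.equivFin.symm (interGraph P) w'
      have h2 := hconv P.card (SimpleGraph.comap (⇑P.equivFin.symm) (interGraph P))
      rw [h1] at h2
      refine h2.congr fun n => h1 _
    exact hlim.congr'
      (by filter_upwards [eventually_gt_atTop 0] with n hn; exact (hB n hn).symm)
  refine ⟨?_, fun hp => momentFormula_odd hp w⟩
  have := (Complex.continuous_ofReal.tendsto _).comp hC
  exact Tendsto.congr (fun n => (hA n).symm) this

end EpsCLT
end

section
/- Let p be an even natural number, π ∈ P_2(p), and g a finite simple graph on vertex set [n]. Let S(π, g) be the set of tuples i ∈ [n]^p such that ker(i) = π (i.e. i_u = i_v if and only if u and v lie in the same block of π) and such that for all u₁ < u₂ < v₁ < v₂ with u₁ ∼_π v₁, u₂ ∼_π v₂ and u₁ ≁_π u₂, the pair (i_{u₁}, i_{u₂}) is an edge of g. Then the map sending i ∈ S(π, g) to the function on the blocks of π assigning to each block its common i-value is a bijection from S(π, g) onto the set of injective graph homomorphisms from the intersection graph f_π to g. In particular |S(π, g)| equals the number of injective graph homomorphisms from f_π to g. -/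
open MeasureTheory Filter Topology
open scoped Classical

namespace EpsCLT

/-- The tuples `i ∈ [n]^p` with `ker(i) = π` satisfying the `(g, i)`-noncrossing edge condition
are in bijection (via taking common values on blocks) with the injective graph homomorphisms
from the intersection graph `f_π` to `g`; in particular the two sets are equinumerous. -/
theorem kernel_tuples_bij_injective_homs
    {p n : ℕ} (hp : Even p) (P : Finset (Finset (Fin p))) (hP : IsPairPartition P)
    (g : SimpleGraph (Fin n)) :
    Set.BijOn
      (fun (idx : Fin p → Fin n) (B : {B // B ∈ P}) =>
        idx (B.1.min' (Finset.card_pos.mp (by have := hP.1 B.1 B.2; omega))))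
      {idx : Fin p → Fin n |
        (∀ u v : Fin p, (idx u = idx v ↔ ∃ B ∈ P, u ∈ B ∧ v ∈ B)) ∧
        (∀ u₁ u₂ v₁ v₂ : Fin p, u₁ < u₂ → u₂ < v₁ → v₁ < v₂ →
          (∃ B ∈ P, u₁ ∈ B ∧ v₁ ∈ B) → (∃ B ∈ P, u₂ ∈ B ∧ v₂ ∈ B) →
          ¬ (∃ B ∈ P, u₁ ∈ B ∧ u₂ ∈ B) → g.Adj (idx u₁) (idx u₂))}
      {φ : {B // B ∈ P} → Fin n | Function.Injective φ ∧
        ∀ U V : {B // B ∈ P}, (interGraph P).Adj U V → g.Adj (φ U) (φ V)} ∧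
    {idx : Fin p → Fin n |
        (∀ u v : Fin p, (idx u = idx v ↔ ∃ B ∈ P, u ∈ B ∧ v ∈ B)) ∧
        (∀ u₁ u₂ v₁ v₂ : Fin p, u₁ < u₂ → u₂ < v₁ → v₁ < v₂ →
          (∃ B ∈ P, u₁ ∈ B ∧ v₁ ∈ B) → (∃ B ∈ P, u₂ ∈ B ∧ v₂ ∈ B) →
          ¬ (∃ B ∈ P, u₁ ∈ B ∧ u₂ ∈ B) → g.Adj (idx u₁) (idx u₂))}.ncard =
      (injHomFinset (interGraph P) g).card := by
  classical
  have hcard := hP.1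
  have huniq := hP.2
  have key : ∀ (u : Fin p) (B₁ B₂ : Finset (Fin p)), B₁ ∈ P → B₂ ∈ P → u ∈ B₁ → u ∈ B₂ →
      B₁ = B₂ := by
    intro u B₁ B₂ h1 h2 hu1 hu2
    obtain ⟨B, -, hBu⟩ := huniq u
    rw [hBu B₁ ⟨h1, hu1⟩, hBu B₂ ⟨h2, hu2⟩]
  choose blk hblkP hblkmem using fun u => (huniq u).exists
  have hbij : Set.BijOn
      (fun (idx : Fin p → Fin n) (B : {B // B ∈ P}) =>
        idx (B.1.min' (Finset.card_pos.mp (by have := hP.1 B.1 B.2; omega))))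
      {idx : Fin p → Fin n |
        (∀ u v : Fin p, (idx u = idx v ↔ ∃ B ∈ P, u ∈ B ∧ v ∈ B)) ∧
        (∀ u₁ u₂ v₁ v₂ : Fin p, u₁ < u₂ → u₂ < v₁ → v₁ < v₂ →
          (∃ B ∈ P, u₁ ∈ B ∧ v₁ ∈ B) → (∃ B ∈ P, u₂ ∈ B ∧ v₂ ∈ B) →
          ¬ (∃ B ∈ P, u₁ ∈ B ∧ u₂ ∈ B) → g.Adj (idx u₁) (idx u₂))}
      {φ : {B // B ∈ P} → Fin n | Function.Injective φ ∧
        ∀ U V : {B // B ∈ P}, (interGraph P).Adj U V → g.Adj (φ U) (φ V)} := by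
    refine ⟨?_, ?_, ?_⟩
    · -- MapsTo
      rintro idx ⟨hker, hedge⟩
      refine ⟨?_, ?_⟩
      · -- injective
        intro B₁ B₂ h
        obtain ⟨B, hBP, h1, h2⟩ := (hker _ _).mp h
        exact Subtype.ext ((key _ _ _ B₁.2 hBP (Finset.min'_mem _ _) h1).trans
          (key _ _ _ hBP B₂.2 h2 (Finset.min'_mem _ _)))
      · -- hom
        rintro U V ⟨hne, i, k, j, l, hik, hkj, hjl, hcase⟩
        have hneq : U.1 ≠ V.1 := fun h => hne (Subtype.ext h)
        rcases hcase with ⟨hi, hj, hk, hl⟩ | ⟨hi, hj, hk, hl⟩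
        · have hadj : g.Adj (idx i) (idx k) := by
            refine hedge i k j l hik hkj hjl ⟨U.1, U.2, hi, hj⟩ ⟨V.1, V.2, hk, hl⟩ ?_
            rintro ⟨B, hBP, hu1, hu2⟩
            exact hneq ((key _ _ _ U.2 hBP hi hu1).trans (key _ _ _ hBP V.2 hu2 hk))
          have e1 : idx i = idx (U.1.min' ⟨i, hi⟩) :=
            (hker _ _).mpr ⟨U.1, U.2, hi, Finset.min'_mem _ _⟩
          have e2 : idx k = idx (V.1.min' ⟨k, hk⟩) :=
            (hker _ _).mpr ⟨V.1, V.2, hk, Finset.min'_mem _ _⟩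
          show g.Adj (idx (U.1.min' ⟨i, hi⟩)) (idx (V.1.min' ⟨k, hk⟩))
          rw [← e1, ← e2]; exact hadj
        · have hadj : g.Adj (idx i) (idx k) := by
            refine hedge i k j l hik hkj hjl ⟨V.1, V.2, hi, hj⟩ ⟨U.1, U.2, hk, hl⟩ ?_
            rintro ⟨B, hBP, hu1, hu2⟩
            exact hneq ((key _ _ _ U.2 hBP hk hu2).trans (key _ _ _ hBP V.2 hu1 hi))
          have e1 : idx i = idx (V.1.min' ⟨i, hi⟩) :=
            (hker _ _).mpr ⟨V.1, V.2, hi, Finset.min'_mem _ _⟩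
          have e2 : idx k = idx (U.1.min' ⟨k, hk⟩) :=
            (hker _ _).mpr ⟨U.1, U.2, hk, Finset.min'_mem _ _⟩
          show g.Adj (idx (U.1.min' ⟨k, hk⟩)) (idx (V.1.min' ⟨i, hi⟩))
          rw [← e1, ← e2]; exact hadj.symm
    · -- InjOn
      rintro idx1 ⟨hker1, -⟩ idx2 ⟨hker2, -⟩ heq
      funext u
      have h1 : idx1 u = idx1 ((blk u).min' ⟨u, hblkmem u⟩) :=
        (hker1 _ _).mpr ⟨blk u, hblkP u, hblkmem u, Finset.min'_mem _ _⟩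
      have h2 : idx2 u = idx2 ((blk u).min' ⟨u, hblkmem u⟩) :=
        (hker2 _ _).mpr ⟨blk u, hblkP u, hblkmem u, Finset.min'_mem _ _⟩
      have := congrFun heq ⟨blk u, hblkP u⟩
      simp only at this
      rw [h1, h2, this]
    · -- SurjOn
      rintro φ ⟨hinj, hhom⟩
      refine ⟨fun u => φ ⟨blk u, hblkP u⟩, ⟨?_, ?_⟩, ?_⟩
      · intro u v
        constructor
        · intro h
          have := hinj h
          exact ⟨blk u, hblkP u, hblkmem u, by
            rw [show blk u = blk v from congrArg Subtype.val this]; exact hblkmem v⟩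
        · rintro ⟨B, hBP, hu, hv⟩
          have h1 : blk u = B := key u _ _ (hblkP u) hBP (hblkmem u) hu
          have h2 : blk v = B := key v _ _ (hblkP v) hBP (hblkmem v) hv
          exact congrArg φ (Subtype.ext (h1.trans h2.symm))
      · rintro u₁ u₂ v₁ v₂ h12 h21 h22 ⟨B₁, hB₁, hu₁, hv₁⟩ ⟨B₂, hB₂, hu₂, hv₂⟩ hnot
        have e1 : blk u₁ = B₁ := key u₁ _ _ (hblkP u₁) hB₁ (hblkmem u₁) hu₁
        have e2 : blk u₂ = B₂ := key u₂ _ _ (hblkP u₂) hB₂ (hblkmem u₂) hu₂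
        have hne : (⟨blk u₁, hblkP u₁⟩ : {B // B ∈ P}) ≠ ⟨blk u₂, hblkP u₂⟩ := by
          intro h
          exact hnot ⟨blk u₁, hblkP u₁, hblkmem u₁, by
            rw [show blk u₁ = blk u₂ from congrArg Subtype.val h]; exact hblkmem u₂⟩
        refine hhom _ _ ⟨hne, u₁, u₂, v₁, v₂, h12, h21, h22, Or.inl ?_⟩
        exact ⟨hblkmem u₁, e1 ▸ hv₁, hblkmem u₂, e2 ▸ hv₂⟩
      · funext B
        simp only
        have hb : blk (B.1.min' (Finset.card_pos.mp (by have := hP.1 B.1 B.2; omega))) = B.1 :=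
          key _ _ _ (hblkP _) B.2 (hblkmem _) (Finset.min'_mem _ _)
        exact congrArg φ (Subtype.ext hb)
  refine ⟨hbij, ?_⟩
  have hT : {φ : {B // B ∈ P} → Fin n | Function.Injective φ ∧
        ∀ U V : {B // B ∈ P}, (interGraph P).Adj U V → g.Adj (φ U) (φ V)} =
      ↑(injHomFinset (interGraph P) g) := by
    ext φ
    simp [injHomFinset]
  rw [← Set.ncard_coe_finset, ← hT, ← hbij.image_eq, Set.ncard_image_of_injOn hbij.injOn]

end EpsCLT
end

section
/- Let w, w' : [0,1]² → [0,1] be graphons and λ ∈ (0,1). Define the graphon w̄* by w̄*(x,y) = w(x/λ, y/λ) if x, y ∈ [0,λ); w̄*(x,y) = w'((x−λ)/(1−λ), (y−λ)/(1−λ)) if x, y ∈ [λ,1]; and w̄*(x,y) = 0 otherwise. Then for every connected finite simple graph f with k ≥ 1 vertices, ρ(f, w̄*) = λ^k ρ(f, w) + (1−λ)^k ρ(f, w'). -/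
open MeasureTheory Filter Topology
open scoped Classical

namespace EpsCLT

/-- Auxiliary: measurability of the edge product composed with a graphon. -/
lemma measurable_edgeProd_comp {V : Type*} [Fintype V] (f : SimpleGraph V) {w : ℝ → ℝ → ℝ}
    (hw : Measurable (Function.uncurry w)) :
    Measurable (fun x : V → ℝ => edgeProd f (fun u v => w (x u) (x v))) := by
  unfold edgeProd
  apply Finset.measurable_prod
  intro e _
  induction e using Sym2.ind with
  | _ u v =>
    simp only [Sym2.lift_mk]
    have h1 : Measurable fun x : V → ℝ => w (x u) (x v) := by
      have e : (fun x : V → ℝ => w (x u) (x v))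
          = Function.uncurry w ∘ (fun x : V → ℝ => (x u, x v)) := rfl
      rw [e]
      exact hw.comp ((measurable_pi_apply u).prodMk (measurable_pi_apply v))
    have h2 : Measurable fun x : V → ℝ => w (x v) (x u) := by
      have e : (fun x : V → ℝ => w (x v) (x u))
          = Function.uncurry w ∘ (fun x : V → ℝ => (x v, x u)) := rfl
      rw [e]
      exact hw.comp ((measurable_pi_apply v).prodMk (measurable_pi_apply u))
    exact (h1.add h2).div_const 2

/-- Auxiliary: the edge product of a `[0,1]`-valued kernel lies in `[0,1]`. -/
lemma edgeProd_mem_Icc {V : Type*} [Fintype V] (f : SimpleGraph V) {F : V → V → ℝ}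
    (h : ∀ u v, F u v ∈ Set.Icc (0:ℝ) 1) : edgeProd f F ∈ Set.Icc (0:ℝ) 1 := by
  have key : ∀ e : Sym2 V,
      Sym2.lift ⟨fun u v => (F u v + F v u) / 2, fun u v => by ring⟩ e ∈ Set.Icc (0:ℝ) 1 := by
    intro e
    induction e using Sym2.ind with
    | _ u v =>
      simp only [Sym2.lift_mk]
      obtain ⟨h1, h2⟩ := h u v
      obtain ⟨h3, h4⟩ := h v u
      constructor <;> [linarith; linarith]
  unfold edgeProd
  exact ⟨Finset.prod_nonneg fun e _ => (key e).1,
    Finset.prod_le_one (fun e _ => (key e).1) (fun e _ => (key e).2)⟩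


/-- For the "free convolution" gluing `w̄*` of two graphons along `[0,λ) ⊔ [λ,1]` (zero between
the two blocks), the homomorphism density of a connected graph splits as
`ρ(f, w̄*) = λ^k ρ(f, w) + (1-λ)^k ρ(f, w')`. -/
theorem density_free_glue
    (w w' : ℝ → ℝ → ℝ)
    (hw_meas : Measurable (Function.uncurry w))
    (hw_symm : ∀ x y : ℝ, w x y = w y x)
    (hw_mem : ∀ x y : ℝ, w x y ∈ Set.Icc (0:ℝ) 1)
    (hw'_meas : Measurable (Function.uncurry w'))
    (hw'_symm : ∀ x y : ℝ, w' x y = w' y x)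
    (hw'_mem : ∀ x y : ℝ, w' x y ∈ Set.Icc (0:ℝ) 1)
    (lam : ℝ) (hlam : lam ∈ Set.Ioo (0:ℝ) 1)
    {V : Type*} [Fintype V] (f : SimpleGraph V) (hconn : f.Connected) :
    density f (fun x y =>
      if x ∈ Set.Ico (0:ℝ) lam ∧ y ∈ Set.Ico (0:ℝ) lam then w (x / lam) (y / lam)
      else if x ∈ Set.Icc lam 1 ∧ y ∈ Set.Icc lam 1 then
        w' ((x - lam) / (1 - lam)) ((y - lam) / (1 - lam))
      else 0)
    = lam ^ (Fintype.card V) * density f w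
      + (1 - lam) ^ (Fintype.card V) * density f w' := by
  classical
  obtain ⟨hl0, hl1⟩ := hlam
  have hl1' : (0:ℝ) < 1 - lam := by linarith
  have hVne : Nonempty V := hconn.nonempty
  set gl : ℝ → ℝ → ℝ := fun x y =>
      if x ∈ Set.Ico (0:ℝ) lam ∧ y ∈ Set.Ico (0:ℝ) lam then w (x / lam) (y / lam)
      else if x ∈ Set.Icc lam 1 ∧ y ∈ Set.Icc lam 1 then
        w' ((x - lam) / (1 - lam)) ((y - lam) / (1 - lam))
      else 0 with hgl
  set S : Set (V → ℝ) := Set.univ.pi fun _ : V => Set.Icc (0:ℝ) 1 with hS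
  set A : Set (V → ℝ) := Set.univ.pi fun _ : V => Set.Ico (0:ℝ) lam with hA
  set B : Set (V → ℝ) := Set.univ.pi fun _ : V => Set.Icc lam 1 with hB
  set H₀ : (V → ℝ) → ℝ := fun y => edgeProd f (fun u v => w (y u) (y v)) with hH₀
  set H₀' : (V → ℝ) → ℝ := fun y => edgeProd f (fun u v => w' (y u) (y v)) with hH₀'
  set c : V → ℝ := fun _ => lam with hc
  set G : (V → ℝ) → ℝ := fun x => edgeProd f (fun u v => gl (x u) (x v)) with hG
  have hSm : MeasurableSet S := MeasurableSet.univ_pi fun _ => measurableSet_Icc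
  have hAm : MeasurableSet A := MeasurableSet.univ_pi fun _ => measurableSet_Ico
  have hBm : MeasurableSet B := MeasurableSet.univ_pi fun _ => measurableSet_Icc
  have hAS : A ⊆ S := by
    intro x hx
    rw [hA, Set.mem_univ_pi] at hx
    rw [hS, Set.mem_univ_pi]
    exact fun v => ⟨(hx v).1, le_trans (le_of_lt (hx v).2) (le_of_lt hl1)⟩
  have hBS : B ⊆ S := by
    intro x hx
    rw [hB, Set.mem_univ_pi] at hx
    rw [hS, Set.mem_univ_pi]
    exact fun v => ⟨le_trans (le_of_lt hl0) (hx v).1, (hx v).2⟩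
  have hdisj : Disjoint A B := by
    rw [Set.disjoint_left]
    intro x hxA hxB
    obtain ⟨v⟩ := hVne
    rw [hA, Set.mem_univ_pi] at hxA
    rw [hB, Set.mem_univ_pi] at hxB
    exact absurd (hxA v).2 (not_lt.2 (hxB v).1)
  have hH₀m : Measurable H₀ := by rw [hH₀]; exact measurable_edgeProd_comp f hw_meas
  have hH₀'m : Measurable H₀' := by rw [hH₀']; exact measurable_edgeProd_comp f hw'_meas
  have hH₀_bd : ∀ y, ‖H₀ y‖ ≤ 1 := by
    intro y
    have h := edgeProd_mem_Icc f (F := fun u v => w (y u) (y v)) (fun u v => hw_mem _ _)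
    rw [hH₀]
    rw [Real.norm_eq_abs, abs_le]
    exact ⟨by linarith [h.1], h.2⟩
  have hH₀'_bd : ∀ y, ‖H₀' y‖ ≤ 1 := by
    intro y
    have h := edgeProd_mem_Icc f (F := fun u v => w' (y u) (y v)) (fun u v => hw'_mem _ _)
    rw [hH₀']
    rw [Real.norm_eq_abs, abs_le]
    exact ⟨by linarith [h.1], h.2⟩
  -- pointwise identifications on A and B
  have eqA : ∀ x ∈ A, G x = H₀ (lam⁻¹ • x) := by
    intro x hx
    rw [hA, Set.mem_univ_pi] at hx
    rw [hG, hH₀]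
    dsimp only
    congr 1
    funext u v
    rw [hgl]
    dsimp only
    rw [if_pos ⟨hx u, hx v⟩]
    simp only [Pi.smul_apply, smul_eq_mul, div_eq_inv_mul]
  have eqB : ∀ x ∈ B, G x = H₀' ((1 - lam)⁻¹ • (x - c)) := by
    intro x hx
    rw [hB, Set.mem_univ_pi] at hx
    rw [hG, hH₀']
    dsimp only
    congr 1
    funext u v
    rw [hgl]
    dsimp only
    have hne : ¬ (x u ∈ Set.Ico (0:ℝ) lam ∧ x v ∈ Set.Ico (0:ℝ) lam) := by
      rintro ⟨h1, -⟩
      exact absurd h1.2 (not_lt.2 (hx u).1)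
    rw [if_neg hne, if_pos ⟨hx u, hx v⟩]
    simp only [hc, Pi.smul_apply, Pi.sub_apply, smul_eq_mul, div_eq_inv_mul]
  have eqZero : ∀ x ∈ S, x ∉ A → x ∉ B → G x = 0 := by
    intro x hxS hxA hxB
    rw [hS, Set.mem_univ_pi] at hxS
    rw [hA, Set.mem_univ_pi] at hxA
    rw [hB, Set.mem_univ_pi] at hxB
    push_neg at hxA hxB
    obtain ⟨u, hu⟩ := hxA
    obtain ⟨v, hv⟩ := hxB
    have hu' : lam ≤ x u := le_of_not_gt fun h => hu ⟨(hxS u).1, h⟩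
    have hv' : x v < lam := lt_of_not_ge fun h => hv ⟨h, (hxS v).2⟩
    obtain ⟨p⟩ := hconn.preconnected v u
    obtain ⟨d, hd, hdT, hdT'⟩ := p.exists_boundary_dart {a : V | x a < lam} hv' (not_lt.2 hu')
    have he : s(d.fst, d.snd) ∈ f.edgeFinset := SimpleGraph.mem_edgeFinset.2 d.adj
    have hfst : x d.fst < lam := hdT
    have hsnd : lam ≤ x d.snd := not_lt.1 hdT'
    have h1 : gl (x d.fst) (x d.snd) = 0 := by
      rw [hgl]; dsimp only
      split_ifs with h h'
      · exact absurd h.2.2 (not_lt.2 hsnd)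
      · exact absurd h'.1.1 (not_le.2 hfst)
      · rfl
    have h2 : gl (x d.snd) (x d.fst) = 0 := by
      rw [hgl]; dsimp only
      split_ifs with h h'
      · exact absurd h.1.2 (not_lt.2 hsnd)
      · exact absurd h'.2.1 (not_le.2 hfst)
      · rfl
    rw [hG]
    dsimp only
    unfold edgeProd
    apply Finset.prod_eq_zero he
    rw [Sym2.lift_mk]
    dsimp only
    rw [h1, h2]
    norm_num
  -- finiteness and integrability
  have hSfin : volume S < ⊤ := by
    rw [hS, volume_pi_pi]
    simp only [Real.volume_Icc, sub_zero, ENNReal.ofReal_one, Finset.prod_const_one]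
    exact ENNReal.one_lt_top
  have hGA_int : IntegrableOn G A volume := by
    refine IntegrableOn.congr_fun ?_ (fun x hx => (eqA x hx).symm) hAm
    refine Measure.integrableOn_of_bounded (M := 1)
      (ne_of_lt (lt_of_le_of_lt (measure_mono hAS) hSfin)) ?_ ?_
    · exact (hH₀m.comp (measurable_id.const_smul lam⁻¹)).aestronglyMeasurable
    · exact Filter.Eventually.of_forall fun x => hH₀_bd _
  have hGB_int : IntegrableOn G B volume := by
    refine IntegrableOn.congr_fun ?_ (fun x hx => (eqB x hx).symm) hBm
    refine Measure.integrableOn_of_bounded (M := 1)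
      (ne_of_lt (lt_of_le_of_lt (measure_mono hBS) hSfin)) ?_ ?_
    · exact (hH₀'m.comp ((measurable_id.sub_const c).const_smul (1 - lam)⁻¹)).aestronglyMeasurable
    · exact Filter.Eventually.of_forall fun x => hH₀'_bd _
  -- splitting the integral
  have hsplit : ∫ x in S, G x = (∫ x in A, G x) + ∫ x in B, G x := by
    have h1 : ∫ x in S, G x = ∫ x in S, (A ∪ B).indicator G x := by
      apply setIntegral_congr_fun hSm
      intro x hx
      by_cases hx' : x ∈ A ∪ B
      · rw [Set.indicator_of_mem hx']
      · rw [Set.indicator_of_notMem hx']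
        exact eqZero x hx (fun h => hx' (Or.inl h)) (fun h => hx' (Or.inr h))
    rw [h1, setIntegral_indicator (hAm.union hBm),
      Set.inter_eq_self_of_subset_right (Set.union_subset hAS hBS),
      setIntegral_union hdisj hBm hGA_int hGB_int]
  -- membership transport under the affine maps
  have hmemA : ∀ x : V → ℝ,
      (lam⁻¹ • x ∈ Set.univ.pi fun _ : V => Set.Ico (0:ℝ) 1) ↔ x ∈ A := by
    intro x
    rw [hA, Set.mem_univ_pi, Set.mem_univ_pi]
    refine forall_congr' fun v => ?_
    rw [Pi.smul_apply, smul_eq_mul, Set.mem_Ico, Set.mem_Ico]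
    constructor
    · rintro ⟨h1, h2⟩
      have hx : x v = lam * (lam⁻¹ * x v) := by field_simp
      constructor
      · rw [hx]; exact mul_nonneg hl0.le h1
      · calc x v = lam * (lam⁻¹ * x v) := hx
          _ < lam * 1 := mul_lt_mul_of_pos_left h2 hl0
          _ = lam := mul_one lam
    · rintro ⟨h1, h2⟩
      constructor
      · exact mul_nonneg (inv_nonneg.2 hl0.le) h1
      · calc lam⁻¹ * x v < lam⁻¹ * lam := mul_lt_mul_of_pos_left h2 (inv_pos.2 hl0)
          _ = 1 := inv_mul_cancel₀ (ne_of_gt hl0)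
  have hmemB : ∀ x : V → ℝ, ((1 - lam)⁻¹ • (x - c) ∈ S) ↔ x ∈ B := by
    intro x
    rw [hS, hB, Set.mem_univ_pi, Set.mem_univ_pi]
    refine forall_congr' fun v => ?_
    simp only [hc, Pi.smul_apply, Pi.sub_apply, smul_eq_mul, Set.mem_Icc]
    constructor
    · rintro ⟨h1, h2⟩
      have hx : x v - lam = (1 - lam) * ((1 - lam)⁻¹ * (x v - lam)) := by field_simp
      constructor
      · nlinarith [mul_nonneg hl1'.le h1]
      · have : (1 - lam) * ((1 - lam)⁻¹ * (x v - lam)) ≤ (1 - lam) * 1 :=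
          mul_le_mul_of_nonneg_left h2 hl1'.le
        nlinarith
    · rintro ⟨h1, h2⟩
      constructor
      · exact mul_nonneg (inv_nonneg.2 hl1'.le) (by linarith)
      · calc (1 - lam)⁻¹ * (x v - lam) ≤ (1 - lam)⁻¹ * (1 - lam) :=
              mul_le_mul_of_nonneg_left (by linarith) (inv_nonneg.2 hl1'.le)
          _ = 1 := inv_mul_cancel₀ (ne_of_gt hl1')
  have hdw : density f w = ∫ x in S, H₀ x := by rw [hS, hH₀]; rfl
  have hdw' : density f w' = ∫ x in S, H₀' x := by rw [hS, hH₀']; rfl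
  have hIcoIcc : (Set.univ.pi fun _ : V => Set.Ico (0:ℝ) 1) =ᵐ[volume] S := by
    rw [hS, volume_pi]
    exact Measure.pi_Ico_ae_eq_pi_Icc
  have hIco_m : MeasurableSet (Set.univ.pi fun _ : V => Set.Ico (0:ℝ) 1) :=
    MeasurableSet.univ_pi fun _ => measurableSet_Ico
  -- the A piece
  have hApiece : ∫ x in A, G x = lam ^ Fintype.card V * density f w := by
    have e2 : (fun x => A.indicator (fun x => H₀ (lam⁻¹ • x)) x)
        = fun x => ((Set.univ.pi fun _ : V => Set.Ico (0:ℝ) 1).indicator H₀) (lam⁻¹ • x) := by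
      funext x
      by_cases hx : x ∈ A
      · rw [Set.indicator_of_mem hx, Set.indicator_of_mem ((hmemA x).2 hx)]
      · rw [Set.indicator_of_notMem hx, Set.indicator_of_notMem fun h => hx ((hmemA x).1 h)]
    calc ∫ x in A, G x = ∫ x in A, H₀ (lam⁻¹ • x) := setIntegral_congr_fun hAm fun x hx => eqA x hx
      _ = ∫ x, A.indicator (fun x => H₀ (lam⁻¹ • x)) x := (integral_indicator hAm).symm
      _ = ∫ x, ((Set.univ.pi fun _ : V => Set.Ico (0:ℝ) 1).indicator H₀) (lam⁻¹ • x) := by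
            rw [e2]
      _ = |((lam⁻¹) ^ (Module.finrank ℝ (V → ℝ)))⁻¹| •
            ∫ x, ((Set.univ.pi fun _ : V => Set.Ico (0:ℝ) 1).indicator H₀) x :=
            Measure.integral_comp_smul volume _ lam⁻¹
      _ = lam ^ Fintype.card V * ∫ x in (Set.univ.pi fun _ : V => Set.Ico (0:ℝ) 1), H₀ x := by
            rw [integral_indicator hIco_m, Module.finrank_pi, inv_pow, inv_inv,
              abs_of_pos (pow_pos hl0 _), smul_eq_mul]
      _ = lam ^ Fintype.card V * density f w := by
            rw [setIntegral_congr_set hIcoIcc, hdw]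
  -- the B piece
  have hBpiece : ∫ x in B, G x = (1 - lam) ^ Fintype.card V * density f w' := by
    have e2 : (fun x => B.indicator (fun x => H₀' ((1 - lam)⁻¹ • (x - c))) x)
        = fun x => (S.indicator H₀') ((1 - lam)⁻¹ • (x - c)) := by
      funext x
      by_cases hx : x ∈ B
      · rw [Set.indicator_of_mem hx, Set.indicator_of_mem ((hmemB x).2 hx)]
      · rw [Set.indicator_of_notMem hx, Set.indicator_of_notMem fun h => hx ((hmemB x).1 h)]
    calc ∫ x in B, G x = ∫ x in B, H₀' ((1 - lam)⁻¹ • (x - c)) :=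
            setIntegral_congr_fun hBm fun x hx => eqB x hx
      _ = ∫ x, B.indicator (fun x => H₀' ((1 - lam)⁻¹ • (x - c))) x := (integral_indicator hBm).symm
      _ = ∫ x, (S.indicator H₀') ((1 - lam)⁻¹ • (x - c)) := by rw [e2]
      _ = ∫ x, (fun y => (S.indicator H₀') ((1 - lam)⁻¹ • y)) (x - c) := rfl
      _ = ∫ x, (S.indicator H₀') ((1 - lam)⁻¹ • x) := integral_sub_right_eq_self (fun y => (S.indicator H₀') ((1 - lam)⁻¹ • y)) c
      _ = |(((1 - lam)⁻¹) ^ (Module.finrank ℝ (V → ℝ)))⁻¹| • ∫ x, (S.indicator H₀') x :=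
            Measure.integral_comp_smul volume _ (1 - lam)⁻¹
      _ = (1 - lam) ^ Fintype.card V * ∫ x in S, H₀' x := by
            rw [integral_indicator hSm, Module.finrank_pi, inv_pow, inv_inv,
              abs_of_pos (pow_pos hl1' _), smul_eq_mul]
      _ = (1 - lam) ^ Fintype.card V * density f w' := by rw [hdw']
  have hdg : density f gl = ∫ x in S, G x := by rw [hS, hG, hgl]; rfl
  calc density f gl = ∫ x in S, G x := hdg
    _ = (∫ x in A, G x) + ∫ x in B, G x := hsplit
    _ = lam ^ Fintype.card V * density f w + (1 - lam) ^ Fintype.card V * density f w' := by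
          rw [hApiece, hBpiece]

end EpsCLT
end

section
/- Let p ∈ ℕ and π ∈ P_2(p). Let σ(π) be the partition of [p] whose blocks are the unions ∪_{V ∈ c} V taken over the connected components c of the intersection graph f_π. Then σ(π) is a noncrossing partition of [p], i.e. no two blocks of σ(π) cross. -/
open MeasureTheory Filter Topology
open scoped Classical

namespace EpsCLT

/-- Along any walk from a vertex satisfying `Q` to one that doesn't, some edge flips `Q`. -/
private lemma walk_flip {V : Type*} {G : SimpleGraph V} (Q : V → Prop) :
    ∀ {u v : V}, G.Walk u v → Q u → ¬ Q v →
      ∃ x y, G.Adj x y ∧ Q x ∧ ¬ Q y ∧ G.Reachable u x := by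
  intro u v w
  induction w with
  | nil => intro hu hv; exact absurd hu hv
  | @cons u a v h _ ih =>
    intro hu hv
    by_cases hQ : Q a
    · obtain ⟨x, y, hxy, hQx, hQy, hr⟩ := ih hQ hv
      exact ⟨x, y, hxy, hQx, hQy, h.reachable.trans hr⟩
    · exact ⟨u, a, h, hu, hQ, SimpleGraph.Reachable.refl u⟩

/-- If `W` does not cross a set containing `a < b`, is disjoint from `{a, b}`, and has an
element strictly between `a` and `b`, then all of `W` lies strictly between `a` and `b`. -/
private lemma inside_of_noncross {p : ℕ} {S W : Finset (Fin p)} {a b t : Fin p}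
    (ha : a ∈ S) (hb : b ∈ S) (hna : a ∉ W) (hnb : b ∉ W)
    (hnc : ¬ Crosses S W) (ht : t ∈ W) (hat : a < t) (htb : t < b) :
    ∀ s ∈ W, a < s ∧ s < b := by
  intro s hs
  constructor
  · by_contra hle
    push_neg at hle
    have hsa : s < a := lt_of_le_of_ne hle (fun h => hna (h ▸ hs))
    exact hnc ⟨s, a, t, b, hsa, hat, htb, Or.inr ⟨hs, ht, ha, hb⟩⟩
  · by_contra hle
    push_neg at hle
    have hbs : b < s := lt_of_le_of_ne hle (fun h => hnb (h.symm ▸ hs))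
    exact hnc ⟨a, t, b, s, hat, htb, hbs, Or.inl ⟨ha, hb, ht, hs⟩⟩

/-- If `W` crosses `W'` and `W` lies strictly between `a` and `b`, then `W'` has an element
strictly between `a` and `b`. -/
private lemma cross_entry {p : ℕ} {W W' : Finset (Fin p)} {a b : Fin p}
    (hc : Crosses W W') (hW : ∀ t ∈ W, a < t ∧ t < b) :
    ∃ t ∈ W', a < t ∧ t < b := by
  obtain ⟨i, k, j, l, h1, h2, h3, hcase⟩ := hc
  rcases hcase with ⟨hi, hj, hk, hl⟩ | ⟨hi, hj, hk, hl⟩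
  · exact ⟨k, hk, (hW i hi).1.trans h1, h2.trans (hW j hj).2⟩
  · exact ⟨j, hj, (hW k hk).1.trans h2, h3.trans (hW l hl).2⟩

/-- Propagation of the property "lies strictly between `a` and `b`" along walks in the
intersection graph, in a component different from that of `B₁ ∋ a, b`. -/
private lemma prop_along {p : ℕ} {P : Finset (Finset (Fin p))}
    (hdisj : ∀ B B' : {B // B ∈ P}, B ≠ B' → ∀ t, t ∈ B.1 → t ∉ B'.1)
    {a b : Fin p} {B₁ : {B // B ∈ P}} (ha : a ∈ B₁.1) (hb : b ∈ B₁.1) :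
    ∀ {W W' : {B // B ∈ P}}, (interGraph P).Walk W W' →
      (interGraph P).connectedComponentMk W ≠ (interGraph P).connectedComponentMk B₁ →
      (∀ t ∈ W.1, a < t ∧ t < b) → ∀ t ∈ W'.1, a < t ∧ t < b := by
  intro W W' w
  induction w with
  | nil => exact fun _ h => h
  | @cons u x v hadj _ ih =>
    intro hne hu
    have hmkeq : (interGraph P).connectedComponentMk u = (interGraph P).connectedComponentMk x :=
      SimpleGraph.ConnectedComponent.sound hadj.reachable
    have hxc : (interGraph P).connectedComponentMk x ≠ (interGraph P).connectedComponentMk B₁ :=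
      hmkeq ▸ hne
    have hxB : x ≠ B₁ := fun h => hxc (by rw [h])
    have hnc : ¬ Crosses B₁.1 x.1 := by
      intro hc
      have hadj' : (interGraph P).Adj B₁ x := ⟨hxB.symm, hc⟩
      exact hxc (SimpleGraph.ConnectedComponent.sound hadj'.symm.reachable)
    have hcross : Crosses u.1 x.1 := hadj.2
    obtain ⟨t, ht, hat, htb⟩ := cross_entry hcross hu
    have hax : a ∉ x.1 := hdisj B₁ x hxB.symm a ha
    have hbx : b ∉ x.1 := hdisj B₁ x hxB.symm b hb
    exact ih hxc (inside_of_noncross ha hb hax hbx hnc ht hat htb)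

/-- Straddle lemma: if a component `c` avoids a point `z` but has elements on both sides of
`z`, then some block of `c` has elements on both sides of `z`. -/
private lemma straddle {p : ℕ} {P : Finset (Finset (Fin p))}
    {c : (interGraph P).ConnectedComponent} {z : Fin p}
    (hz : ∀ B : {B // B ∈ P}, (interGraph P).connectedComponentMk B = c → z ∉ B.1)
    {Bx By : {B // B ∈ P}}
    (hcx : (interGraph P).connectedComponentMk Bx = c)
    (hcy : (interGraph P).connectedComponentMk By = c)
    {x y : Fin p} (hx : x ∈ Bx.1) (hy : y ∈ By.1) (hxz : x < z) (hzy : z < y) :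
    ∃ B : {B // B ∈ P}, (interGraph P).connectedComponentMk B = c ∧
      ∃ a ∈ B.1, ∃ b ∈ B.1, a < z ∧ z < b := by
  by_contra hno
  push_neg at hno
  have hreach : (interGraph P).Reachable Bx By :=
    SimpleGraph.ConnectedComponent.exact (hcx.trans hcy.symm)
  obtain ⟨w⟩ := hreach
  have hQx : ∀ t ∈ Bx.1, t < z := by
    intro t ht
    rcases lt_trichotomy t z with h | h | h
    · exact h
    · exact absurd (h ▸ ht) (hz Bx hcx)
    · exact absurd h (not_lt.mpr (hno Bx hcx x hx t ht hxz))
  have hQy : ¬ ∀ t ∈ By.1, t < z := fun h => absurd (h y hy) (not_lt.mpr hzy.le)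
  obtain ⟨X, Y, hadj, hQX, hQY, hrX⟩ :=
    walk_flip (fun B : {B // B ∈ P} => ∀ t ∈ B.1, t < z) w hQx hQy
  have hXc : (interGraph P).connectedComponentMk X = c :=
    (SimpleGraph.ConnectedComponent.sound hrX).symm.trans hcx
  have hYc : (interGraph P).connectedComponentMk Y = c :=
    (SimpleGraph.ConnectedComponent.sound hadj.reachable).symm.trans hXc
  push_neg at hQY
  obtain ⟨t0, ht0, ht0z⟩ := hQY
  have hzt0 : z < t0 :=
    lt_of_le_of_ne ht0z (fun h => hz Y hYc (by rw [h]; exact ht0))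
  have hYall : ∀ s ∈ Y.1, z < s := by
    intro s hs
    rcases lt_trichotomy s z with h | h | h
    · exact absurd hzt0 (not_lt.mpr (hno Y hYc s hs t0 ht0 h))
    · exact absurd (show z ∈ Y.1 by rw [← h]; exact hs) (hz Y hYc)
    · exact h
  have hcr : Crosses X.1 Y.1 := hadj.2
  obtain ⟨i, k, j, l, h1, h2, h3, hcase⟩ := hcr
  rcases hcase with ⟨hi, hj, hk, hl⟩ | ⟨hi, hj, hk, hl⟩
  · exact absurd (h2.trans (hQX j hj)) (not_lt.mpr (hYall k hk).le)
  · exact absurd (h1.trans (hQX k hk)) (not_lt.mpr (hYall i hi).le)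

/-- The partition whose blocks are the unions of the blocks of `π` over the connected components
of the intersection graph `f_π` is a noncrossing partition of `[p]`. -/
theorem components_union_noncrossing
    {p : ℕ} (P : Finset (Finset (Fin p))) (hP : IsPairPartition P) :
    IsPartition
      ((Finset.univ : Finset (interGraph P).ConnectedComponent).image
        (fun c => (Finset.univ.filter
            (fun B : {B // B ∈ P} => (interGraph P).connectedComponentMk B = c)).biUnion
          (fun B => B.1))) ∧
    IsNoncrossing
      ((Finset.univ : Finset (interGraph P).ConnectedComponent).image
        (fun c => (Finset.univ.filter
            (fun B : {B // B ∈ P} => (interGraph P).connectedComponentMk B = c)).biUnion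
          (fun B => B.1))) := by
  classical
  set U : (interGraph P).ConnectedComponent → Finset (Fin p) := fun c =>
    (Finset.univ.filter
        (fun B : {B // B ∈ P} => (interGraph P).connectedComponentMk B = c)).biUnion
      (fun B => B.1) with hUdef
  have hUmem : ∀ (c) (t : Fin p), t ∈ U c ↔
      ∃ B : {B // B ∈ P}, (interGraph P).connectedComponentMk B = c ∧ t ∈ B.1 := by
    intro c t
    simp only [hUdef, Finset.mem_biUnion, Finset.mem_filter, Finset.mem_univ, true_and]
  have hdisj : ∀ B B' : {B // B ∈ P}, B ≠ B' → ∀ t, t ∈ B.1 → t ∉ B'.1 := by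
    intro B B' hne t ht ht'
    exact hne (Subtype.ext ((hP.2 t).unique ⟨B.2, ht⟩ ⟨B'.2, ht'⟩))
  have hbne : ∀ X Y : {B // B ∈ P},
      (interGraph P).connectedComponentMk X ≠ (interGraph P).connectedComponentMk Y →
      X ≠ Y := fun X Y hne h => hne (by rw [h])
  have hncross : ∀ X Y : {B // B ∈ P},
      (interGraph P).connectedComponentMk X ≠ (interGraph P).connectedComponentMk Y →
      ¬ Crosses X.1 Y.1 := by
    intro X Y hne hc
    have hadj : (interGraph P).Adj X Y := ⟨hbne X Y hne, hc⟩
    exact hne (SimpleGraph.ConnectedComponent.sound hadj.reachable)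
  -- key: unions over distinct components do not interleave
  have key : ∀ c₁ c₂ : (interGraph P).ConnectedComponent, c₁ ≠ c₂ →
      ∀ i k j l : Fin p, i < k → k < j → j < l →
      i ∈ U c₁ → j ∈ U c₁ → k ∈ U c₂ → l ∈ U c₂ → False := by
    intro c₁ c₂ hcc i k j l h1 h2 h3 hi hj hk hl
    obtain ⟨Bi, hBi, hiB⟩ := (hUmem c₁ i).mp hi
    obtain ⟨Bj, hBj, hjB⟩ := (hUmem c₁ j).mp hj
    obtain ⟨Bk, hBk, hkB⟩ := (hUmem c₂ k).mp hk
    obtain ⟨Bl, hBl, hlB⟩ := (hUmem c₂ l).mp hl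
    have hnotin : ∀ (c c' : (interGraph P).ConnectedComponent), c ≠ c' →
        ∀ (z : Fin p) (Bz : {B // B ∈ P}),
          (interGraph P).connectedComponentMk Bz = c' → z ∈ Bz.1 →
          ∀ B : {B // B ∈ P}, (interGraph P).connectedComponentMk B = c → z ∉ B.1 := by
      intro c c' hne z Bz hBz hzB B hBc hzB'
      have hBBz : B = Bz := by
        by_contra hBB
        exact hdisj B Bz hBB z hzB' hzB
      exact hne (by rw [← hBc, hBBz, hBz])
    have hknot := hnotin c₁ c₂ hcc k Bk hBk hkB
    have hjnot := hnotin c₂ c₁ hcc.symm j Bj hBj hjB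
    obtain ⟨B₁, hB₁c, a, haB, b, hbB, hak, hkb⟩ := straddle hknot hBi hBj hiB hjB h1 h2
    obtain ⟨B₂, hB₂c, a', haB', b', hbB', haj, hjb⟩ := straddle hjnot hBk hBl hkB hlB h2 h3
    -- blocks of c₂ lie strictly between a and b
    have hc21 : (interGraph P).connectedComponentMk Bk ≠ (interGraph P).connectedComponentMk B₁ := by
      rw [hBk, hB₁c]; exact hcc.symm
    have hBkne : B₁ ≠ Bk := (hbne Bk B₁ hc21).symm
    have hBkin : ∀ t ∈ Bk.1, a < t ∧ t < b :=
      inside_of_noncross haB hbB (hdisj B₁ Bk hBkne a haB) (hdisj B₁ Bk hBkne b hbB)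
        (hncross B₁ Bk hc21.symm) hkB hak hkb
    obtain ⟨w₂⟩ := SimpleGraph.ConnectedComponent.exact (G := interGraph P)
      (v := Bk) (w := B₂) (hBk.trans hB₂c.symm)
    have hB₂in : ∀ t ∈ B₂.1, a < t ∧ t < b := prop_along hdisj haB hbB w₂ hc21 hBkin
    -- blocks of c₁ lie strictly between a' and b'
    have hc12 : (interGraph P).connectedComponentMk Bj ≠ (interGraph P).connectedComponentMk B₂ := by
      rw [hBj, hB₂c]; exact hcc
    have hBjne : B₂ ≠ Bj := (hbne Bj B₂ hc12).symm
    have hBjin : ∀ t ∈ Bj.1, a' < t ∧ t < b' :=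
      inside_of_noncross haB' hbB' (hdisj B₂ Bj hBjne a' haB') (hdisj B₂ Bj hBjne b' hbB')
        (hncross B₂ Bj hc12.symm) hjB haj hjb
    obtain ⟨w₁⟩ := SimpleGraph.ConnectedComponent.exact (G := interGraph P)
      (v := Bj) (w := B₁) (hBj.trans hB₁c.symm)
    have hB₁in : ∀ t ∈ B₁.1, a' < t ∧ t < b' := prop_along hdisj haB' hbB' w₁ hc12 hBjin
    exact lt_asymm (hB₂in a' haB').1 (hB₁in a haB).1
  refine ⟨⟨?_, ?_⟩, ?_⟩
  · -- nonemptiness of blocks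
    intro S hS
    rw [Finset.mem_image] at hS
    obtain ⟨c, -, rfl⟩ := hS
    obtain ⟨B, hBc⟩ := c.exists_rep
    have hcard : B.1.card = 2 := hP.1 B.1 B.2
    obtain ⟨t, ht⟩ := Finset.card_pos.mp (by rw [hcard]; norm_num)
    exact ⟨t, (hUmem c t).mpr ⟨B, hBc, ht⟩⟩
  · -- every point in exactly one block
    intro t
    obtain ⟨B0, ⟨hB0P, htB0⟩, huniq⟩ := hP.2 t
    set Bs : {B // B ∈ P} := ⟨B0, hB0P⟩ with hBs
    refine ⟨U ((interGraph P).connectedComponentMk Bs),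
      ⟨Finset.mem_image_of_mem _ (Finset.mem_univ _),
        (hUmem _ t).mpr ⟨Bs, rfl, htB0⟩⟩, ?_⟩
    rintro S ⟨hS, htS⟩
    rw [Finset.mem_image] at hS
    obtain ⟨c', -, rfl⟩ := hS
    obtain ⟨B', hB'c, htB'⟩ := (hUmem c' t).mp htS
    have hB'B : B' = Bs := Subtype.ext (huniq B'.1 ⟨B'.2, htB'⟩)
    rw [← hB'c, hB'B]
  · -- noncrossing
    intro S₁ hS₁ S₂ hS₂ hne hcr
    rw [Finset.mem_image] at hS₁ hS₂
    obtain ⟨c₁, -, rfl⟩ := hS₁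
    obtain ⟨c₂, -, rfl⟩ := hS₂
    have hcc : c₁ ≠ c₂ := fun h => hne (by rw [h])
    obtain ⟨i, k, j, l, h1, h2, h3, hcase⟩ := hcr
    rcases hcase with ⟨hi, hj, hk, hl⟩ | ⟨hi, hj, hk, hl⟩
    · exact key c₁ c₂ hcc i k j l h1 h2 h3 hi hj hk hl
    · exact key c₂ c₁ hcc.symm i k j l h1 h2 h3 hi hj hk hl

end EpsCLT
end

section
/- Let f be a connected finite simple graph with k ≥ 1 vertices and let g be a finite simple graph with n vertices and maximum degree Δ. Then hom(f, g) ≤ n · Δ^{k−1}, where hom(f, g) is the number of graph homomorphisms from f to g. -/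
open MeasureTheory Filter Topology
open scoped Classical

namespace EpsCLT

private lemma reachable_comap_of_walk {V : Type*} {G : SimpleGraph V} {v : V} :
    ∀ {a b : V} (p : G.Walk a b), v ∉ p.support → ∀ (ha : a ≠ v) (hb : b ≠ v),
      (G.comap (Subtype.val : {w // w ≠ v} → V)).Reachable ⟨a, ha⟩ ⟨b, hb⟩ := by
  intro a b p
  induction p with
  | nil => exact fun _ ha hb => by rfl
  | @cons x y z h q ih =>
    intro hs hx hz
    rw [SimpleGraph.Walk.support_cons, List.mem_cons] at hs
    push_neg at hs
    have hy : y ≠ v := fun hcv => hs.2 (hcv ▸ q.start_mem_support)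
    exact (SimpleGraph.Adj.reachable (by exact h : (G.comap
      (Subtype.val : {w // w ≠ v} → V)).Adj ⟨x, hx⟩ ⟨y, hy⟩)).trans (ih hs.2 hy hz)

private lemma homCount_aux (n : ℕ) :
    ∀ {V W : Type*} [Fintype V] [Fintype W] (f : SimpleGraph V) (g : SimpleGraph W),
      f.Connected → Fintype.card V = n →
      homCount f g ≤ Fintype.card W * g.maxDegree ^ (n - 1) := by
  induction n using Nat.strong_induction_on with
  | _ n ih =>
    intro V W _ _ f g hconn hcard
    rcases Nat.lt_or_ge n 2 with hn | hn
    · -- n = 0 or 1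
      have hV0 : n ≠ 0 := by
        rintro rfl
        have := hconn.nonempty
        simp [← Fintype.card_pos_iff, hcard] at this
      have hn1 : n = 1 := by omega
      have : homCount f g ≤ Fintype.card (V → W) := by
        apply Finset.card_le_card
        intro x _; exact Finset.mem_univ x
      rw [Fintype.card_fun, hcard, hn1] at this
      simp only [hn1] at this ⊢
      simpa using this
    · -- n ≥ 2 : pick u arbitrary, v maximizing dist u ·
      have hne : Nonempty V := hconn.nonempty
      obtain ⟨u⟩ := hne
      obtain ⟨v, -, hvmax⟩ := Finset.exists_max_image (Finset.univ : Finset V)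
        (fun w => f.dist u w) ⟨u, Finset.mem_univ u⟩
      have hvmax : ∀ w : V, f.dist u w ≤ f.dist u v := fun w => hvmax w (Finset.mem_univ w)
      have huv : u ≠ v := by
        obtain ⟨w, hw⟩ := Fintype.exists_ne_of_one_lt_card (by omega : 1 < Fintype.card V) u
        have h1 : 0 < f.dist u w := hconn.pos_dist_of_ne (Ne.symm hw)
        have := hvmax w
        intro h; subst h
        rw [SimpleGraph.dist_self] at this; omega
      -- shortest walks to u avoid v
      have key : ∀ w : V, w ≠ v → ∃ p : f.Walk w u, v ∉ p.support := by
        intro w hw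
        obtain ⟨p, hp⟩ := (hconn w u).exists_walk_length_eq_dist
        refine ⟨p, fun hv => ?_⟩
        have hsplit := p.take_spec hv
        have hlen : (p.takeUntil v hv).length + (p.dropUntil v hv).length = p.length := by
          have := congrArg SimpleGraph.Walk.length hsplit
          rwa [SimpleGraph.Walk.length_append] at this
        have h1 : 1 ≤ (p.takeUntil v hv).length := by
          rcases Nat.eq_zero_or_pos (p.takeUntil v hv).length with h0 | h0
          · exact absurd (SimpleGraph.Walk.eq_of_length_eq_zero h0) hw
          · omega
        have h2 : f.dist v u ≤ (p.dropUntil v hv).length := SimpleGraph.dist_le _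
        have h3 : f.dist u w ≤ f.dist u v := hvmax w
        rw [SimpleGraph.dist_comm] at h2
        rw [SimpleGraph.dist_comm (u := u) (v := w), ← hp] at h3
        omega
      -- induced subgraph on V' = {w // w ≠ v}
      set f' : SimpleGraph {w // w ≠ v} := f.comap (Subtype.val) with hf'
      have hcard' : Fintype.card {w // w ≠ v} = n - 1 := by
        have := Fintype.card_subtype_compl (fun w : V => w = v)
        simp only [Fintype.card_subtype_eq] at this
        rw [← hcard]
        simpa using this
      have hconn' : f'.Connected := by
        rw [SimpleGraph.connected_iff]
        refine ⟨fun a b => ?_, ⟨⟨u, huv⟩⟩⟩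
        obtain ⟨p, hp⟩ := key a.1 a.2
        obtain ⟨q, hq⟩ := key b.1 b.2
        exact (reachable_comap_of_walk p hp a.2 huv).trans
          (reachable_comap_of_walk q hq b.2 huv).symm
      -- v has a neighbor u₀
      obtain ⟨u₀, hu₀⟩ : ∃ u₀ : V, f.Adj u₀ v := by
        obtain ⟨p, hp⟩ := (hconn v u).exists_walk_length_eq_dist
        have hnil : ¬ p.Nil := SimpleGraph.Walk.not_nil_of_ne (Ne.symm huv)
        exact ⟨p.getVert 1, (p.adj_snd hnil).symm⟩
      have hu₀v : u₀ ≠ v := hu₀.ne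
      -- restriction map and fiber counting
      set r : (V → W) → ({w // w ≠ v} → W) := fun φ w => φ w.1 with hr
      have hmaps : ∀ φ ∈ homFinset f g, r φ ∈ homFinset f' g := by
        intro φ hφ
        simp only [homFinset, Finset.mem_filter, Finset.mem_univ, true_and] at hφ ⊢
        intro a b hab
        exact hφ a.1 b.1 hab
      have hsum := Finset.card_eq_sum_card_fiberwise hmaps
      have hfiber : ∀ ψ ∈ homFinset f' g,
          ((homFinset f g).filter (fun φ => r φ = ψ)).card ≤ g.maxDegree := by
        intro ψ _
        have h1 : ((homFinset f g).filter (fun φ => r φ = ψ)).card ≤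
            (g.neighborFinset (ψ ⟨u₀, hu₀v⟩)).card := by
          apply Finset.card_le_card_of_injOn (fun φ => φ v)
          · intro φ hφ
            simp only [Finset.mem_coe, Finset.mem_filter] at hφ ⊢
            obtain ⟨hφ1, hφ2⟩ := hφ
            simp only [homFinset, Finset.mem_filter, Finset.mem_univ, true_and] at hφ1
            have : g.Adj (φ u₀) (φ v) := hφ1 u₀ v hu₀
            rw [SimpleGraph.mem_neighborFinset, ← hφ2]
            exact this
          · intro φ₁ hφ₁ φ₂ hφ₂ hv12
            simp only [Finset.mem_filter, Finset.mem_coe] at hφ₁ hφ₂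
            funext w
            by_cases hw : w = v
            · subst hw; exact hv12
            · have := congrFun (hφ₁.2.trans hφ₂.2.symm) ⟨w, hw⟩
              exact this
        calc ((homFinset f g).filter (fun φ => r φ = ψ)).card
            ≤ (g.neighborFinset (ψ ⟨u₀, hu₀v⟩)).card := h1
          _ = g.degree (ψ ⟨u₀, hu₀v⟩) := rfl
          _ ≤ g.maxDegree := g.degree_le_maxDegree _
      have hih : homCount f' g ≤ Fintype.card W * g.maxDegree ^ (n - 1 - 1) :=
        ih (n - 1) (by omega) f' g hconn' hcard'
      calc homCount f g
          = ∑ ψ ∈ homFinset f' g, ((homFinset f g).filter (fun φ => r φ = ψ)).card := hsum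
        _ ≤ ∑ _ψ ∈ homFinset f' g, g.maxDegree := Finset.sum_le_sum hfiber
        _ = homCount f' g * g.maxDegree := by rw [Finset.sum_const, smul_eq_mul]; rfl
        _ ≤ (Fintype.card W * g.maxDegree ^ (n - 1 - 1)) * g.maxDegree :=
            Nat.mul_le_mul_right _ hih
        _ = Fintype.card W * g.maxDegree ^ (n - 1) := by
            rw [mul_assoc, ← pow_succ]
            congr 2
            omega

/-- If `f` is connected with `k` vertices and `g` has `n` vertices and maximum degree `Δ`, then
`hom(f, g) ≤ n · Δ^(k-1)`. -/
theorem homCount_le_card_mul_maxDegree_pow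
    {V W : Type*} [Fintype V] [Fintype W]
    (f : SimpleGraph V) (g : SimpleGraph W) (hconn : f.Connected) :
    homCount f g ≤ Fintype.card W * g.maxDegree ^ (Fintype.card V - 1) :=
  homCount_aux (Fintype.card V) f g hconn rfl

end EpsCLT
end
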